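/- arXiv:2404.07515 — 5 statements merged into one kernel-verified Lean document; each statement's English description precedes it below -/
import Mathlib

section
/- Let d ≥ 2, m ≥ 1, and let A ∈ ℝ^{m×d} have rows a_1,…,a_m. Suppose L ≥ 0 and U ≥ 0 are such that L·dist(x,y) ≤ ‖Φ_A(x) − Φ_A(y)‖₂ ≤ U·dist(x,y) for all x, y ∈ ℝ^d. Then π·L² ≤ (π − 2)·U². (Equivalently, the condition number β_A = U_A/L_A of any real measurement matrix satisfies β_A ≥ √(π/(π−2)).) -/
open Real

open intervalIntegral


lemma per_shift (f : ℝ → ℝ) (hf : Function.Periodic f (2*π)) (c : ℝ) :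
    ∫ t in (0:ℝ)..(2*π), f (t - c) = ∫ t in (0:ℝ)..(2*π), f t := by
  rw [intervalIntegral.integral_comp_sub_right f c,
    show (0:ℝ) - c = -c by ring, show 2*π - c = -c + 2*π by ring]
  simpa using hf.intervalIntegral_add_eq (-c) 0

lemma abs_sin_periodic : Function.Periodic (fun t => |Real.sin t|) (2*π) :=
  fun x => by simp [Real.sin_periodic x]

lemma int_abs_sin : ∫ t in (0:ℝ)..(2*π), |Real.sin t| = 4 := by
  have h1 : ∫ t in (0:ℝ)..π, |Real.sin t| = 2 := by
    rw [intervalIntegral.integral_congr (g := Real.sin)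
      (by intro t ht
          rw [Set.uIcc_of_le Real.pi_nonneg] at ht
          exact abs_of_nonneg (Real.sin_nonneg_of_nonneg_of_le_pi ht.1 ht.2))]
    rw [integral_sin]; norm_num
  have h2 : ∫ t in (π:ℝ)..(2*π), |Real.sin t| = 2 := by
    rw [intervalIntegral.integral_congr (g := fun t => -Real.sin t)
      (by intro t ht
          rw [Set.uIcc_of_le (by linarith [Real.pi_pos] : (π:ℝ) ≤ 2*π)] at ht
          have h3 : Real.sin (t - π) ≥ 0 :=
            Real.sin_nonneg_of_nonneg_of_le_pi (by linarith [ht.1]) (by linarith [ht.2])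
          rw [Real.sin_sub_pi] at h3
          exact abs_of_nonpos (neg_nonneg.mp h3))]
    rw [intervalIntegral.integral_neg, integral_sin]; norm_num
  have hi : ∀ a b : ℝ, IntervalIntegrable (fun t => |Real.sin t|) MeasureTheory.volume a b :=
    fun a b => (continuous_sin.abs).intervalIntegrable a b
  have := intervalIntegral.integral_add_adjacent_intervals (hi 0 π) (hi π (2*π))
  linarith

lemma int_abs_sin2 : ∫ t in (0:ℝ)..(2*π), |Real.sin (2*t)| = 4 := by
  rw [intervalIntegral.integral_comp_mul_left (fun t => |Real.sin t|) two_ne_zero]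
  have hi : ∀ a b : ℝ, IntervalIntegrable (fun t => |Real.sin t|) MeasureTheory.volume a b :=
    fun a b => (continuous_sin.abs).intervalIntegrable a b
  have hsplit := intervalIntegral.integral_add_adjacent_intervals (hi 0 (2*π)) (hi (2*π) (2*(2*π)))
  have h2 : ∫ t in (2*π:ℝ)..(2*(2*π)), |Real.sin t| = 4 := by
    have := abs_sin_periodic.intervalIntegral_add_eq (2*π) 0
    rw [show (2*π:ℝ) + 2*π = 2*(2*π) by ring] at this
    rw [this]; simpa using int_abs_sin
  rw [show (2:ℝ) * 0 = 0 by ring, ← hsplit, int_abs_sin, h2]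
  norm_num

lemma g_int : ∫ θ in (0:ℝ)..(2*π), (|Real.cos θ| - |Real.sin θ|)^2 = 2*π - 4 := by
  have hpt : ∀ θ : ℝ, (|Real.cos θ| - |Real.sin θ|)^2 = 1 - |Real.sin (2*θ)| := by
    intro θ
    have h1 : (|Real.cos θ| - |Real.sin θ|)^2
        = |Real.cos θ|^2 + |Real.sin θ|^2 - 2*(|Real.sin θ| * |Real.cos θ|) := by ring
    have h2 : |Real.sin (2*θ)| = 2 * (|Real.sin θ| * |Real.cos θ|) := by
      rw [Real.sin_two_mul, abs_mul, abs_mul, abs_two]; try ring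
    rw [h1, sq_abs, sq_abs, h2]
    have := Real.sin_sq_add_cos_sq θ
    linarith
  rw [intervalIntegral.integral_congr (g := fun θ => 1 - |Real.sin (2*θ)|)
    (fun t _ => hpt t)]
  rw [intervalIntegral.integral_sub (intervalIntegrable_const)
    ((Continuous.abs (by fun_prop) : Continuous fun x : ℝ => |Real.sin (2*x)|).intervalIntegrable 0 (2*π))]
  rw [int_abs_sin2]
  simp; try ring

lemma cross_int {δ : ℝ} (h0 : 0 < δ) (h1 : δ ≤ 1) :
    ∫ t in (0:ℝ)..(2*π), |Real.cos δ + Real.cos t|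
      = 2*π*Real.cos δ - 4*δ*Real.cos δ + 4*Real.sin δ := by
  have hπ : (3:ℝ) < π := Real.pi_gt_three
  have hδπ : δ < π/2 := by linarith
  have key : ∀ a b : ℝ, ∫ t in a..b, (Real.cos δ + Real.cos t)
      = (b-a)*Real.cos δ + (Real.sin b - Real.sin a) := by
    intro a b
    rw [intervalIntegral.integral_add (intervalIntegrable_const)
      (continuous_cos.intervalIntegrable a b), integral_cos]
    simp [mul_comm]
  have hi : ∀ a b : ℝ, IntervalIntegrable (fun t => |Real.cos δ + Real.cos t|)
      MeasureTheory.volume a b :=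
    fun a b => ((continuous_const.add continuous_cos).abs).intervalIntegrable a b
  have s1 : ∫ t in (0:ℝ)..(π-δ), |Real.cos δ + Real.cos t|
      = (π-δ)*Real.cos δ + Real.sin δ := by
    rw [intervalIntegral.integral_congr (g := fun t => Real.cos δ + Real.cos t)
      (by intro t ht
          rw [Set.uIcc_of_le (by linarith)] at ht
          have : Real.cos (π - δ) ≤ Real.cos t :=
            Real.cos_le_cos_of_nonneg_of_le_pi ht.1 (by linarith) ht.2
          rw [Real.cos_pi_sub] at this
          exact abs_of_nonneg (by linarith))]
    rw [key, Real.sin_pi_sub, Real.sin_zero]; ring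
  have s2 : ∫ t in (π-δ:ℝ)..(π+δ), |Real.cos δ + Real.cos t|
      = -2*δ*Real.cos δ + 2*Real.sin δ := by
    rw [intervalIntegral.integral_congr (g := fun t => -(Real.cos δ + Real.cos t))
      (by intro t ht
          rw [Set.uIcc_of_le (by linarith)] at ht
          have h2 : Real.cos δ ≤ Real.cos |t - π| := by
            apply Real.cos_le_cos_of_nonneg_of_le_pi (abs_nonneg _) (by linarith)
            rw [abs_le]; constructor <;> [linarith [ht.1]; linarith [ht.2]]
          rw [Real.cos_abs, Real.cos_sub, Real.cos_pi, Real.sin_pi] at h2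
          exact abs_of_nonpos (by linarith))]
    rw [intervalIntegral.integral_neg, key, Real.sin_add, Real.sin_sub, Real.sin_pi, Real.cos_pi]
    ring
  have s3 : ∫ t in (π+δ:ℝ)..(2*π), |Real.cos δ + Real.cos t|
      = (π-δ)*Real.cos δ + Real.sin δ := by
    rw [intervalIntegral.integral_congr (g := fun t => Real.cos δ + Real.cos t)
      (by intro t ht
          rw [Set.uIcc_of_le (by linarith)] at ht
          have h2 : Real.cos (π - δ) ≤ Real.cos (2*π - t) :=
            Real.cos_le_cos_of_nonneg_of_le_pi (by linarith [ht.2]) (by linarith [ht.1])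
              (by linarith [ht.1])
          rw [Real.cos_pi_sub] at h2
          have h3 : Real.cos (2*π - t) = Real.cos t := by
            rw [Real.cos_sub, Real.cos_two_pi, Real.sin_two_pi]; ring
          rw [h3] at h2
          exact abs_of_nonneg (by linarith))]
    rw [key, Real.sin_two_pi, Real.sin_add, Real.sin_pi, Real.cos_pi]
    ring
  have q1 := intervalIntegral.integral_add_adjacent_intervals (hi 0 (π-δ)) (hi (π-δ) (π+δ))
  have q2 := intervalIntegral.integral_add_adjacent_intervals (hi 0 (π+δ)) (hi (π+δ) (2*π))
  rw [← q2, ← q1, s1, s2, s3]; ring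

lemma K_int {δ : ℝ} (h0 : 0 < δ) (h1 : δ ≤ 1) :
    ∫ θ in (0:ℝ)..(2*π), (|Real.cos θ| - |Real.cos (θ - δ)|)^2
      = 2*π*(1 - Real.cos δ) - 4*(Real.sin δ - δ*Real.cos δ) := by
  have hpt : ∀ θ : ℝ, (|Real.cos θ| - |Real.cos (θ - δ)|)^2
      = Real.cos θ^2 + Real.cos (θ-δ)^2 - |Real.cos δ + Real.cos (2*θ - δ)| := by
    intro θ
    have hk : Real.cos δ + Real.cos (2*θ - δ) = 2*(Real.cos θ * Real.cos (θ - δ)) := by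
      have e1 := Real.cos_sub θ (θ - δ)
      have e2 := Real.cos_add θ (θ - δ)
      rw [show θ - (θ - δ) = δ by ring] at e1
      rw [show θ + (θ - δ) = 2*θ - δ by ring] at e2
      linarith
    have h2 : |Real.cos δ + Real.cos (2*θ - δ)| = 2*(|Real.cos θ| * |Real.cos (θ-δ)|) := by
      rw [hk, abs_mul, abs_mul, abs_two]; try ring
    have h3 : (|Real.cos θ| - |Real.cos (θ - δ)|)^2
        = |Real.cos θ|^2 + |Real.cos (θ-δ)|^2 - 2*(|Real.cos θ| * |Real.cos (θ-δ)|) := by ring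
    rw [h3, sq_abs, sq_abs, h2]
  rw [intervalIntegral.integral_congr
    (g := fun θ => Real.cos θ^2 + Real.cos (θ-δ)^2 - |Real.cos δ + Real.cos (2*θ - δ)|)
    (fun t _ => hpt t)]
  have i1 : IntervalIntegrable (fun θ : ℝ => Real.cos θ^2) MeasureTheory.volume 0 (2*π) :=
    (continuous_cos.pow 2).intervalIntegrable 0 (2*π)
  have i2 : IntervalIntegrable (fun θ : ℝ => Real.cos (θ-δ)^2) MeasureTheory.volume 0 (2*π) :=
    ((continuous_cos.comp (continuous_id.sub continuous_const)).pow 2).intervalIntegrable 0 (2*π)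
  have i3 : IntervalIntegrable (fun θ : ℝ => |Real.cos δ + Real.cos (2*θ - δ)|)
      MeasureTheory.volume 0 (2*π) :=
    ((continuous_const.add (continuous_cos.comp ((continuous_const.mul continuous_id).sub
      continuous_const))).abs).intervalIntegrable 0 (2*π)
  rw [intervalIntegral.integral_sub (i1.add i2) i3, intervalIntegral.integral_add i1 i2]
  have v1 : ∫ θ in (0:ℝ)..(2*π), Real.cos θ^2 = π := by
    rw [integral_cos_sq]; simp; try ring
  have v2 : ∫ θ in (0:ℝ)..(2*π), Real.cos (θ-δ)^2 = π := by
    have hper : Function.Periodic (fun t => Real.cos t ^ 2) (2*π) :=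
      fun x => by simp [Real.cos_periodic x]
    rw [per_shift _ hper δ, v1]
  have v3 : ∫ θ in (0:ℝ)..(2*π), |Real.cos δ + Real.cos (2*θ - δ)|
      = 2*π*Real.cos δ - 4*δ*Real.cos δ + 4*Real.sin δ := by
    rw [intervalIntegral.integral_comp_mul_sub (fun t => |Real.cos δ + Real.cos t|)
      two_ne_zero δ]
    have hg : Function.Periodic (fun t => |Real.cos δ + Real.cos t|) (2*π) :=
      fun x => by simp [Real.cos_periodic x]
    have hig : ∀ a b : ℝ, IntervalIntegrable (fun t => |Real.cos δ + Real.cos t|)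
        MeasureTheory.volume a b :=
      fun a b => ((continuous_const.add continuous_cos).abs).intervalIntegrable a b
    have split := intervalIntegral.integral_add_adjacent_intervals
      (hig (2*0 - δ) (2*0 - δ + 2*π)) (hig (2*0 - δ + 2*π) (2*(2*π) - δ))
    have p1 : ∫ t in (2*0 - δ : ℝ)..(2*0 - δ + 2*π), |Real.cos δ + Real.cos t|
        = 2*π*Real.cos δ - 4*δ*Real.cos δ + 4*Real.sin δ := by
      have := hg.intervalIntegral_add_eq (2*0 - δ) 0
      rw [this]
      simpa using cross_int h0 h1
    have p2 : ∫ t in (2*0 - δ + 2*π : ℝ)..(2*(2*π) - δ), |Real.cos δ + Real.cos t|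
        = 2*π*Real.cos δ - 4*δ*Real.cos δ + 4*Real.sin δ := by
      have h4 : (2*(2*π) - δ : ℝ) = (2*0 - δ + 2*π) + 2*π := by ring
      rw [h4]
      have := hg.intervalIntegral_add_eq (2*0 - δ + 2*π) 0
      rw [this]
      simpa using cross_int h0 h1
    rw [← split, p1, p2]
    simp; try ring
  rw [v1, v2, v3]; ring

lemma amp (a b : ℝ) : ∃ r φ : ℝ, 0 ≤ r ∧ r^2 = a^2 + b^2 ∧
    ∀ θ, a * Real.cos θ + b * Real.sin θ = r * Real.cos (θ - φ) := by
  refine ⟨‖(⟨a, b⟩ : ℂ)‖, Complex.arg ⟨a, b⟩, norm_nonneg _, ?_, ?_⟩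
  · rw [Complex.sq_norm, Complex.normSq_mk]; ring
  · intro θ
    have hc := Complex.norm_mul_cos_arg ⟨a, b⟩
    have hs := Complex.norm_mul_sin_arg ⟨a, b⟩
    have hc' : ‖(⟨a,b⟩ : ℂ)‖ * Real.cos (Complex.arg ⟨a,b⟩) = a := hc
    have hs' : ‖(⟨a,b⟩ : ℂ)‖ * Real.sin (Complex.arg ⟨a,b⟩) = b := hs
    rw [Real.cos_sub]
    linear_combination (-Real.cos θ) * hc' + (-Real.sin θ) * hs'

/-- The ℓ₂ norm of `Φ_A(x) - Φ_A(y)`, where `Φ_A(x) = (|⟨a_1,x⟩|, …, |⟨a_m,x⟩|)`. -/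
noncomputable def phiDist {m d : ℕ} (A : Fin m → EuclideanSpace ℝ (Fin d))
    (x y : EuclideanSpace ℝ (Fin d)) : ℝ :=
  Real.sqrt (∑ i, (|(inner ℝ (A i) x : ℝ)| - |(inner ℝ (A i) y : ℝ)|) ^ 2)

set_option maxHeartbeats 2000000 in
theorem stmt0 {d m : ℕ} (hd : 2 ≤ d) (hm : 1 ≤ m)
    (A : Fin m → EuclideanSpace ℝ (Fin d)) (L U : ℝ) (hL : 0 ≤ L) (hU : 0 ≤ U)
    (hlow : ∀ x y : EuclideanSpace ℝ (Fin d),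
      L * min ‖x - y‖ ‖x + y‖ ≤ phiDist A x y)
    (hup : ∀ x y : EuclideanSpace ℝ (Fin d),
      phiDist A x y ≤ U * min ‖x - y‖ ‖x + y‖) :
    π * L ^ 2 ≤ (π - 2) * U ^ 2 := by
  have hπ3 : (3:ℝ) < π := Real.pi_gt_three
  have hπ4 : π < 3.15 := Real.pi_lt_d2
  have h0d : 0 < d := by omega
  have h1d : 1 < d := by omega
  set i0 : Fin d := ⟨0, h0d⟩ with hi0
  set i1 : Fin d := ⟨1, h1d⟩ with hi1
  have hne : i0 ≠ i1 := by simp [hi0, hi1, Fin.ext_iff]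
  set u : EuclideanSpace ℝ (Fin d) := EuclideanSpace.single i0 (1:ℝ) with hu_def
  set v : EuclideanSpace ℝ (Fin d) := EuclideanSpace.single i1 (1:ℝ) with hv_def
  have huv : (inner ℝ u v : ℝ) = 0 := by
    rw [hu_def, EuclideanSpace.inner_single_left]
    simp [hv_def, EuclideanSpace.single_apply, hne]
  have hu : ‖u‖ = 1 := by rw [hu_def, EuclideanSpace.norm_single]; norm_num
  have hv : ‖v‖ = 1 := by rw [hv_def, EuclideanSpace.norm_single]; norm_num
  set x : ℝ → EuclideanSpace ℝ (Fin d) :=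
    fun θ => Real.cos θ • u + Real.sin θ • v with hx
  have hnorm2 : ∀ a b : ℝ, ‖a • u + b • v‖^2 = a^2 + b^2 := by
    intro a b
    rw [norm_add_sq_real, norm_smul, norm_smul, real_inner_smul_left,
      real_inner_smul_right, huv, hu, hv]
    simp [Real.norm_eq_abs, mul_pow, sq_abs]
  have hxsub : ∀ θ θ' : ℝ, ‖x θ - x θ'‖^2 = 2 - 2*Real.cos (θ - θ') := by
    intro θ θ'
    have e : x θ - x θ' = (Real.cos θ - Real.cos θ') • u + (Real.sin θ - Real.sin θ') • v := by
      simp only [hx]; module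
    rw [e, hnorm2, Real.cos_sub]
    nlinarith [Real.sin_sq_add_cos_sq θ, Real.sin_sq_add_cos_sq θ']
  have hxadd : ∀ θ θ' : ℝ, ‖x θ + x θ'‖^2 = 2 + 2*Real.cos (θ - θ') := by
    intro θ θ'
    have e : x θ + x θ' = (Real.cos θ + Real.cos θ') • u + (Real.sin θ + Real.sin θ') • v := by
      simp only [hx]; module
    rw [e, hnorm2, Real.cos_sub]
    nlinarith [Real.sin_sq_add_cos_sq θ, Real.sin_sq_add_cos_sq θ']
  set α : Fin m → ℝ := fun i => inner ℝ (A i) u with hα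
  set β : Fin m → ℝ := fun i => inner ℝ (A i) v with hβ
  have hF : ∀ (i : Fin m) (θ : ℝ),
      (inner ℝ (A i) (x θ) : ℝ) = α i * Real.cos θ + β i * Real.sin θ := by
    intro i θ
    simp only [hx]
    rw [inner_add_right, real_inner_smul_right, real_inner_smul_right]
    simp only [hα, hβ]; ring
  choose r φ hr0 hr2 hrφ using fun i => amp (α i) (β i)
  have hFr : ∀ (i : Fin m) (θ : ℝ),
      (inner ℝ (A i) (x θ) : ℝ) = r i * Real.cos (θ - φ i) := by
    intro i θ; rw [hF, hrφ]
  set S : ℝ := ∑ i, (r i)^2 with hS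
  have hS0 : 0 ≤ S := Finset.sum_nonneg fun i _ => sq_nonneg _
  have hphi2 : ∀ y z : EuclideanSpace ℝ (Fin d), (phiDist A y z)^2
      = ∑ i, (|(inner ℝ (A i) y : ℝ)| - |(inner ℝ (A i) z : ℝ)|)^2 := by
    intro y z
    rw [phiDist, Real.sq_sqrt (Finset.sum_nonneg fun i _ => sq_nonneg _)]
  have hphi0 : ∀ y z : EuclideanSpace ℝ (Fin d), 0 ≤ phiDist A y z := by
    intro y z; rw [phiDist]; exact Real.sqrt_nonneg _
  -- lower bound pointwise
  have low_pt : ∀ θ : ℝ, 2*L^2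
      ≤ ∑ i, (r i)^2 * (|Real.cos (θ - φ i)| - |Real.sin (θ - φ i)|)^2 := by
    intro θ
    have hd2 : ‖x θ - x (θ + π/2)‖^2 = 2 := by
      rw [hxsub, show θ - (θ + π/2) = -(π/2) by ring, Real.cos_neg, Real.cos_pi_div_two]; ring
    have hd2' : ‖x θ + x (θ + π/2)‖^2 = 2 := by
      rw [hxadd, show θ - (θ + π/2) = -(π/2) by ring, Real.cos_neg, Real.cos_pi_div_two]; ring
    have hn1 : ‖x θ - x (θ + π/2)‖ = Real.sqrt 2 := by
      rw [← Real.sqrt_sq (norm_nonneg (x θ - x (θ + π/2))), hd2]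
    have hn2 : ‖x θ + x (θ + π/2)‖ = Real.sqrt 2 := by
      rw [← Real.sqrt_sq (norm_nonneg (x θ + x (θ + π/2))), hd2']
    have h := hlow (x θ) (x (θ + π/2))
    rw [hn1, hn2, min_self] at h
    have hsq : (L * Real.sqrt 2)^2 ≤ (phiDist A (x θ) (x (θ + π/2)))^2 :=
      pow_le_pow_left₀ (by positivity) h 2
    rw [hphi2] at hsq
    have hLs : (L * Real.sqrt 2)^2 = 2*L^2 := by
      rw [mul_pow, Real.sq_sqrt (by norm_num : (0:ℝ) ≤ 2)]; ring
    rw [hLs] at hsq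
    refine hsq.trans (le_of_eq (Finset.sum_congr rfl fun i _ => ?_))
    rw [hFr, hFr, show θ + π/2 - φ i = (θ - φ i) + π/2 by ring, Real.cos_add_pi_div_two,
      abs_mul, abs_mul, abs_of_nonneg (hr0 i), abs_neg]
    ring
  -- integrate lower bound
  have hInt_i : ∀ i : Fin m, ∫ θ in (0:ℝ)..(2*π),
      (r i)^2 * (|Real.cos (θ - φ i)| - |Real.sin (θ - φ i)|)^2 = (r i)^2 * (2*π - 4) := by
    intro i
    rw [intervalIntegral.integral_const_mul]
    congr 1
    have hper : Function.Periodic (fun t => (|Real.cos t| - |Real.sin t|)^2) (2*π) :=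
      fun s => by simp [Real.cos_periodic s, Real.sin_periodic s]
    exact (per_shift _ hper (φ i)).trans g_int
  have low_int : 2*L^2 * (2*π) ≤ S * (2*π - 4) := by
    have hcont : ∀ i : Fin m, Continuous
        (fun θ : ℝ => (r i)^2 * (|Real.cos (θ - φ i)| - |Real.sin (θ - φ i)|)^2) := by
      intro i; fun_prop
    have hint : IntervalIntegrable
        (fun θ => ∑ i, (r i)^2 * (|Real.cos (θ - φ i)| - |Real.sin (θ - φ i)|)^2)
        MeasureTheory.volume 0 (2*π) :=
      (continuous_finset_sum _ fun i _ => hcont i).intervalIntegrable _ _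
    have hmono := intervalIntegral.integral_mono_on (by linarith : (0:ℝ) ≤ 2*π)
      intervalIntegrable_const hint (fun θ _ => low_pt θ)
    rw [intervalIntegral.integral_const,
      intervalIntegral.integral_finset_sum (fun i _ => (hcont i).intervalIntegrable _ _)] at hmono
    have hsum : ∑ i, (∫ θ in (0:ℝ)..(2*π),
        (r i)^2 * (|Real.cos (θ - φ i)| - |Real.sin (θ - φ i)|)^2) = S * (2*π - 4) := by
      rw [Finset.sum_congr rfl (fun i _ => hInt_i i), ← Finset.sum_mul]
    rw [hsum, smul_eq_mul] at hmono
    linarith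
  -- upper bound integrated
  have up_int : ∀ δ : ℝ, 0 < δ → δ ≤ 1 →
      S * (2*π*(1 - Real.cos δ) - 4*(Real.sin δ - δ*Real.cos δ))
        ≤ U^2*(2 - 2*Real.cos δ) * (2*π) := by
    intro δ hδ0 hδ1
    have up_pt : ∀ θ : ℝ, ∑ i, (r i)^2 * (|Real.cos (θ - φ i)| - |Real.cos (θ - φ i + δ)|)^2
        ≤ U^2*(2 - 2*Real.cos δ) := by
      intro θ
      have h := hup (x θ) (x (θ + δ))
      have h2 : phiDist A (x θ) (x (θ + δ)) ≤ U * ‖x θ - x (θ + δ)‖ :=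
        h.trans (mul_le_mul_of_nonneg_left (min_le_left _ _) hU)
      have h3 : (phiDist A (x θ) (x (θ + δ)))^2 ≤ (U * ‖x θ - x (θ + δ)‖)^2 :=
        pow_le_pow_left₀ (hphi0 _ _) h2 2
      rw [hphi2] at h3
      have h4 : (U * ‖x θ - x (θ + δ)‖)^2 = U^2 * (2 - 2*Real.cos δ) := by
        rw [mul_pow, hxsub, show θ - (θ + δ) = -δ by ring, Real.cos_neg]
      rw [h4] at h3
      refine le_trans (le_of_eq (Finset.sum_congr rfl fun i _ => ?_)) h3
      rw [hFr, hFr, show θ + δ - φ i = θ - φ i + δ by ring,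
        abs_mul, abs_mul, abs_of_nonneg (hr0 i)]
      ring
    have hInt2_i : ∀ i : Fin m, ∫ θ in (0:ℝ)..(2*π),
        (r i)^2 * (|Real.cos (θ - φ i)| - |Real.cos (θ - φ i + δ)|)^2
        = (r i)^2 * (2*π*(1 - Real.cos δ) - 4*(Real.sin δ - δ*Real.cos δ)) := by
      intro i
      rw [intervalIntegral.integral_const_mul]
      congr 1
      have hper : Function.Periodic (fun t => (|Real.cos (t - δ)| - |Real.cos t|)^2) (2*π) :=
        fun s => by
          simp only
          rw [show s + 2*π - δ = (s - δ) + 2*π by ring, Real.cos_periodic (s - δ),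
            Real.cos_periodic s]
      have hshift := per_shift _ hper (φ i - δ)
      have h5 : ∫ θ in (0:ℝ)..(2*π), (|Real.cos (θ - φ i)| - |Real.cos (θ - φ i + δ)|)^2
          = ∫ θ in (0:ℝ)..(2*π), (|Real.cos (θ - (φ i - δ) - δ)| - |Real.cos (θ - (φ i - δ))|)^2 := by
        apply intervalIntegral.integral_congr
        intro t _
        dsimp only
        rw [show t - (φ i - δ) - δ = t - φ i by ring, show t - (φ i - δ) = t - φ i + δ by ring]
      have h6 : ∫ θ in (0:ℝ)..(2*π), (|Real.cos (θ - δ)| - |Real.cos θ|)^2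
          = 2*π*(1 - Real.cos δ) - 4*(Real.sin δ - δ*Real.cos δ) := by
        rw [intervalIntegral.integral_congr
          (g := fun θ => (|Real.cos θ| - |Real.cos (θ - δ)|)^2) (fun t _ => by ring)]
        exact K_int hδ0 hδ1
      rw [h5]
      exact hshift.trans h6
    have hcont : ∀ i : Fin m, Continuous
        (fun θ : ℝ => (r i)^2 * (|Real.cos (θ - φ i)| - |Real.cos (θ - φ i + δ)|)^2) := by
      intro i; fun_prop
    have hint : IntervalIntegrable
        (fun θ => ∑ i, (r i)^2 * (|Real.cos (θ - φ i)| - |Real.cos (θ - φ i + δ)|)^2)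
        MeasureTheory.volume 0 (2*π) :=
      (continuous_finset_sum _ fun i _ => hcont i).intervalIntegrable _ _
    have hmono := intervalIntegral.integral_mono_on (by linarith : (0:ℝ) ≤ 2*π)
      hint intervalIntegrable_const (fun θ _ => up_pt θ)
    rw [intervalIntegral.integral_const,
      intervalIntegral.integral_finset_sum (fun i _ => (hcont i).intervalIntegrable _ _)] at hmono
    have hsum : ∑ i, (∫ θ in (0:ℝ)..(2*π),
        (r i)^2 * (|Real.cos (θ - φ i)| - |Real.cos (θ - φ i + δ)|)^2)
        = S * (2*π*(1 - Real.cos δ) - 4*(Real.sin δ - δ*Real.cos δ)) := by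
      rw [Finset.sum_congr rfl (fun i _ => hInt2_i i), ← Finset.sum_mul]
    rw [hsum, smul_eq_mul] at hmono
    linarith
  -- deduce S ≤ 2 U^2
  have hS2 : π * S ≤ 2*π*U^2 := by
    refine le_of_forall_pos_le_add ?_
    intro ε hε
    set C : ℝ := 2*π*U^2 + 4*S + 1 with hC
    have hC1 : (1:ℝ) ≤ C := by nlinarith [sq_nonneg U]
    have hC0 : (0:ℝ) < C := by linarith
    set δ : ℝ := min 1 (ε / C) with hδ
    have hδ0 : 0 < δ := lt_min one_pos (div_pos hε hC0)
    have hδ1 : δ ≤ 1 := min_le_left _ _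
    have hδε : C * δ ≤ ε := by
      calc C * δ ≤ C * (ε / C) := mul_le_mul_of_nonneg_left (min_le_right _ _) hC0.le
        _ = ε := by field_simp
    have hup2 := up_int δ hδ0 hδ1
    -- Taylor bounds
    have habs : |δ| ≤ 1 := by rw [abs_of_pos hδ0]; exact hδ1
    have hcb := Real.cos_bound habs
    rw [abs_sub_le_iff] at hcb
    have hcb1 : Real.cos δ ≤ 1 - δ^2/2 + |δ|^4*(5/96) := by linarith [hcb.1]
    have hcb2 : 1 - δ^2/2 - |δ|^4*(5/96) ≤ Real.cos δ := by linarith [hcb.2]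
    rw [abs_of_pos hδ0] at hcb1 hcb2
    have hsb : Real.sin δ ≤ δ := Real.sin_le hδ0.le
    have hδ4 : δ^4 ≤ δ^3 := pow_le_pow_of_le_one hδ0.le hδ1 (by norm_num)
    have hδ5 : δ^3 ≤ δ^2 := pow_le_pow_of_le_one hδ0.le hδ1 (by norm_num)
    -- K(δ) ≥ π δ² - 4 δ³ ; 2 - 2 cos δ ≤ δ² + δ³
    have hπδ4 : π*δ^4 ≤ 3.15*δ^4 := mul_le_mul_of_nonneg_right hπ4.le (by positivity)
    have hδ5' : δ^5 ≤ δ^3 := pow_le_pow_of_le_one hδ0.le hδ1 (by norm_num)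
    have hδ3nn : (0:ℝ) ≤ δ^3 := by positivity
    have hKlb : π*δ^2 - 4*δ^3 ≤ 2*π*(1 - Real.cos δ) - 4*(Real.sin δ - δ*Real.cos δ) := by
      have t1 : 2*π*(δ^2/2 - δ^4*(5/96)) ≤ 2*π*(1 - Real.cos δ) :=
        mul_le_mul_of_nonneg_left (by linarith) (by linarith)
      have t2 : δ*(1 - δ^2/2 - δ^4*(5/96)) ≤ δ*Real.cos δ :=
        mul_le_mul_of_nonneg_left hcb2 hδ0.le
      linarith [t1, t2, hsb, hπδ4, hδ4, hδ5', hδ3nn]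
    have hcub : 2 - 2*Real.cos δ ≤ δ^2 + δ^3 := by linarith [hcb2, hδ4]
    have key : S * (π*δ^2 - 4*δ^3) ≤ U^2 * (δ^2 + δ^3) * (2*π) := by
      calc S * (π*δ^2 - 4*δ^3) ≤ S * (2*π*(1 - Real.cos δ) - 4*(Real.sin δ - δ*Real.cos δ)) :=
            mul_le_mul_of_nonneg_left hKlb hS0
        _ ≤ U^2*(2 - 2*Real.cos δ) * (2*π) := hup2
        _ ≤ U^2 * (δ^2 + δ^3) * (2*π) := by
            apply mul_le_mul_of_nonneg_right _ (by linarith)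
            exact mul_le_mul_of_nonneg_left hcub (sq_nonneg U)
    -- divide by δ²
    have expand : (2*π*U^2 + C*δ) * δ^2
        = 2*π*U^2*δ^2 + 2*π*U^2*δ^3 + 4*S*δ^3 + δ^3 := by rw [hC]; ring
    have key2 : (π * S) * δ^2 ≤ (2*π*U^2 + C*δ) * δ^2 := by
      rw [expand]; linarith [key, hδ3nn]
    have key3 : π * S ≤ 2*π*U^2 + C*δ :=
      le_of_mul_le_mul_right key2 (by positivity : (0:ℝ) < δ^2)
    linarith
  -- conclude
  have hSU : S ≤ 2*U^2 := by
    have h := hS2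
    rw [show 2*π*U^2 = π*(2*U^2) by ring] at h
    exact le_of_mul_le_mul_left h (by linarith)
  have hfin : 2*L^2*(2*π) ≤ (2*U^2) * (2*π - 4) :=
    le_trans low_int (mul_le_mul_of_nonneg_right hSU (by linarith))
  nlinarith [hfin]
end

section
/- Let m ≥ 3 be an odd integer and let E_m ∈ ℝ^{m×2} be the harmonic frame. Then the optimal lower Lipschitz constant satisfies L_{E_m} = √(m/2 − 1/(2·sin(π/(2m)))) and the optimal upper Lipschitz constant satisfies U_{E_m} = √(m/2); consequently the condition number is β_{E_m} = U_{E_m}/L_{E_m} = 1/√(1 − 1/(m·sin(π/(2m)))). -/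
open Real

/-- The set of ratios `‖Φ_A(x) - Φ_A(y)‖₂ / dist(x,y)` over pairs with `dist(x,y) ≠ 0`,
where `dist(x,y) = min(‖x-y‖, ‖x+y‖)`. -/
noncomputable def ratioSet {m d : ℕ} (A : Fin m → EuclideanSpace ℝ (Fin d)) : Set ℝ :=
  {r | ∃ x y : EuclideanSpace ℝ (Fin d), min ‖x - y‖ ‖x + y‖ ≠ 0 ∧
    r = phiDist A x y / min ‖x - y‖ ‖x + y‖}

/-- Optimal lower Lipschitz constant. -/
noncomputable def LA {m d : ℕ} (A : Fin m → EuclideanSpace ℝ (Fin d)) : ℝ :=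
  sInf (ratioSet A)

/-- Optimal upper Lipschitz constant. -/
noncomputable def UA {m d : ℕ} (A : Fin m → EuclideanSpace ℝ (Fin d)) : ℝ :=
  sSup (ratioSet A)

/-- The harmonic frame in `ℝ²`: rows `(cos(jπ/m), sin(jπ/m))`, `j = 0, …, m-1`. -/
noncomputable def harmonicFrame (m : ℕ) : Fin m → EuclideanSpace ℝ (Fin 2) :=
  fun j => (EuclideanSpace.equiv (Fin 2) ℝ).symm
    ![Real.cos ((j : ℕ) * π / m), Real.sin ((j : ℕ) * π / m)]

open Finset

noncomputable def sig (m : ℕ) : ℝ := Real.sin (π / (2 * m))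

section aux
variable {m : ℕ}

lemma hmpos (hm : 3 ≤ m) : (0:ℝ) < m := by
  have : (3:ℝ) ≤ m := by exact_mod_cast hm
  linarith

lemma sig_pos (hm : 3 ≤ m) : 0 < sig m := by
  have h0 := hmpos hm
  apply Real.sin_pos_of_pos_of_lt_pi
  · positivity
  · have h3 : (3:ℝ) ≤ m := by exact_mod_cast hm
    rw [div_lt_iff₀ (by positivity)]
    nlinarith [Real.pi_pos]

lemma one_lt_m_sig (hm : 3 ≤ m) : 1 < (m:ℝ) * sig m := by
  have h0 := hmpos hm
  have h3 : (3:ℝ) ≤ m := by exact_mod_cast hm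
  set x := π / (2 * m) with hx
  have hx0 : 0 < x := by positivity
  have hx1 : x ≤ 1 := by
    rw [hx, div_le_one (by positivity)]
    nlinarith [Real.pi_lt_d2]
  have h : x - x ^ 3 / 4 < sig m := by
    have h6 := Real.sin_gt_sub_cube hx0
    have : sig m = Real.sin x := rfl
    rw [this]; nlinarith [pow_pos hx0 3]
  have hmx : (m:ℝ) * x = π / 2 := by rw [hx]; field_simp
  have hxle : x ≤ π / 6 := by
    rw [hx, div_le_div_iff₀ (by positivity) (by norm_num)]
    nlinarith [Real.pi_pos]
  have hpi1 := Real.pi_gt_d6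
  have hpi2 := Real.pi_lt_d2
  have : (m:ℝ) * (x - x ^ 3 / 4) < (m:ℝ) * sig m := by
    apply mul_lt_mul_of_pos_left h h0
  have hexp : (m:ℝ) * (x - x ^ 3 / 4) = π / 2 * (1 - x ^ 2 / 4) := by
    field_simp
    nlinarith [hmx]
  nlinarith [sq_nonneg x, hx0, hxle]

end aux

section key
variable {m : ℕ}

noncomputable def zeta (m : ℕ) : ℂ := Complex.exp (π / m * Complex.I)

lemma zeta_pow (hm : 3 ≤ m) : zeta m ^ m = -1 := by
  have h0 : (m:ℂ) ≠ 0 := by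
    simp; omega
  rw [zeta, ← Complex.exp_nat_mul]
  rw [show (m:ℂ) * (π / m * Complex.I) = π * Complex.I by field_simp]
  exact Complex.exp_pi_mul_I

lemma zeta_ne_one (hm : 3 ≤ m) : zeta m ≠ 1 := by
  intro h
  rw [zeta, Complex.exp_eq_one_iff] at h
  obtain ⟨n, hn⟩ := h
  have hn' : ((π / m : ℝ) : ℂ) * Complex.I = ((n * (2 * π) : ℝ) : ℂ) * Complex.I := by
    push_cast
    rw [hn]
    ring
  have hr : (π / m : ℝ) = n * (2 * π) := by
    have := mul_right_cancel₀ Complex.I_ne_zero hn'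
    exact_mod_cast this
  have h0 := hmpos hm
  have hpi := Real.pi_pos
  have h1 : 0 < π / m := by positivity
  have h2 : π / m < π := by
    rw [div_lt_iff₀ h0]
    have h3 : (3:ℝ) ≤ m := by exact_mod_cast hm
    nlinarith
  rcases le_or_gt n 0 with hn0 | hn0
  · have : (n:ℝ) ≤ 0 := by exact_mod_cast hn0
    nlinarith
  · have : (1:ℝ) ≤ n := by exact_mod_cast hn0
    nlinarith

lemma abs_zeta_sub_one (hm : 3 ≤ m) : ‖zeta m - 1‖ = 2 * sig m := by
  have h0 := hmpos hm
  have hcast : (↑π / ↑m : ℂ) = ((π / m : ℝ) : ℂ) := by push_cast; ring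
  have hre : (zeta m - 1).re = Real.cos (π / m) - 1 := by
    rw [zeta, hcast, Complex.sub_re, Complex.exp_ofReal_mul_I_re, Complex.one_re]
  have him : (zeta m - 1).im = Real.sin (π / m) := by
    rw [zeta, hcast, Complex.sub_im, Complex.exp_ofReal_mul_I_im, Complex.one_im, sub_zero]
  have hns : Complex.normSq (zeta m - 1) = (2 * sig m) ^ 2 := by
    rw [Complex.normSq_apply, hre, him]
    have hhalf : π / m = 2 * (π / (2 * m)) := by ring
    have h1 := Real.cos_two_mul' (π / (2 * m))
    have h2 := Real.sin_sq_add_cos_sq (π / (2 * m))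
    rw [sig, hhalf, h1, Real.sin_two_mul]
    nlinarith
  rw [Complex.norm_def, hns, Real.sqrt_sq (by nlinarith [sig_pos hm])]

lemma sum_exp_single (hm : 3 ≤ m) (ψ : ℝ) :
    ∑ k ∈ range m, Complex.exp ((ψ + k * π / m : ℝ) * Complex.I)
      = Complex.exp ((ψ:ℝ) * Complex.I) * (-2) / (zeta m - 1) := by
  have h0 : (m:ℂ) ≠ 0 := by simp; omega
  have hterm : ∀ k : ℕ, Complex.exp ((ψ + k * π / m : ℝ) * Complex.I)
      = Complex.exp ((ψ:ℝ) * Complex.I) * zeta m ^ k := by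
    intro k
    rw [zeta, ← Complex.exp_nat_mul, ← Complex.exp_add]
    congr 1
    push_cast
    field_simp
  simp only [hterm, ← Finset.mul_sum]
  rw [geom_sum_eq (zeta_ne_one hm), zeta_pow hm]
  field_simp
  ring

end key

section kkey
variable {m : ℕ}

noncomputable def gsum (m : ℕ) (ψ : ℝ) : ℝ := ∑ k ∈ range m, |Real.cos (ψ + k * π / m)|

lemma gsum_periodic (hm : 3 ≤ m) : Function.Periodic (gsum m) (π / m) := by
  intro ψ
  have h0 : (m:ℝ) ≠ 0 := by
    have := hmpos hm; linarith
  have hstep : ∀ k ∈ range m, |Real.cos (ψ + π / m + k * π / m)|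
      = (fun k : ℕ => |Real.cos (ψ + k * π / m)|) (k + 1) := by
    intro k _
    simp only
    congr 1
    push_cast
    ring
  have h1 := Finset.sum_range_succ' (fun k : ℕ => |Real.cos (ψ + k * π / m)|) m
  have h2 := Finset.sum_range_succ (fun k : ℕ => |Real.cos (ψ + k * π / m)|) m
  have hFm : |Real.cos (ψ + (m:ℝ) * π / m)| = |Real.cos (ψ + (0:ℕ) * π / m)| := by
    rw [show ψ + (m:ℝ) * π / m = (ψ + (0:ℕ) * π / m) + π by field_simp; push_cast; ring]
    rw [Real.cos_add_pi, abs_neg]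
  rw [gsum, gsum, Finset.sum_congr rfl hstep]
  simp only at h1 h2 hFm ⊢
  push_cast at h1 h2 hFm ⊢
  linarith

lemma gsum_le_on_interval (hm : 3 ≤ m) {ψ : ℝ} (hlo : -(π/2) ≤ ψ) (hhi : ψ ≤ -(π/2) + π/m) :
    gsum m ψ ≤ 1 / sig m := by
  have h0 := hmpos hm
  have hpi := Real.pi_pos
  have habs : ∀ k ∈ range m, |Real.cos (ψ + k * π / m)| = Real.cos (ψ + k * π / m) := by
    intro k hk
    rw [Finset.mem_range] at hk
    apply abs_of_nonneg
    apply Real.cos_nonneg_of_mem_Icc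
    constructor
    · have : (0:ℝ) ≤ k * π / m := by positivity
      linarith
    · have hk' : (k:ℝ) ≤ (m:ℝ) - 1 := by
        have : (k:ℝ) + 1 ≤ m := by exact_mod_cast hk
        linarith
      have h3 : (k:ℝ) * π / m ≤ ((m:ℝ) - 1) * π / m := by
        gcongr
      have h4 : ((m:ℝ) - 1) * π / m = π - π / m := by
        field_simp
      linarith
  rw [gsum, Finset.sum_congr rfl habs]
  have hre : ∑ k ∈ range m, Real.cos (ψ + k * π / m)
      = (∑ k ∈ range m, Complex.exp ((ψ + k * π / m : ℝ) * Complex.I)).re := by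
    rw [Complex.re_sum]
    exact Finset.sum_congr rfl fun k _ => (Complex.exp_ofReal_mul_I_re _).symm
  rw [hre, sum_exp_single hm]
  refine le_trans (Complex.re_le_norm _) ?_
  rw [norm_div, norm_mul, Complex.norm_exp_ofReal_mul_I, abs_zeta_sub_one hm]
  have hs := sig_pos hm
  rw [show ‖(-2:ℂ)‖ = 2 by simp]
  rw [one_mul]
  rw [div_le_div_iff₀ (by positivity) (by positivity)]
  linarith [sig_pos hm]

lemma gsum_le (hm : 3 ≤ m) (ψ : ℝ) : gsum m ψ ≤ 1 / sig m := by
  have h0 := hmpos hm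
  have hpi := Real.pi_pos
  have hp : 0 < π / m := by positivity
  have hmem := toIcoMod_mem_Ico hp (-(π/2)) ψ
  have heq : gsum m (toIcoMod hp (-(π/2)) ψ) = gsum m ψ := by
    rw [← self_sub_toIcoDiv_zsmul hp (-(π/2)) ψ]
    exact (gsum_periodic hm).sub_zsmul_eq _
  rw [← heq]
  exact gsum_le_on_interval hm hmem.1 (le_of_lt hmem.2)

end kkey

section keq
variable {m : ℕ}

lemma zeta_sub_one_ne (hm : 3 ≤ m) : zeta m - 1 ≠ 0 :=
  sub_ne_zero.mpr (zeta_ne_one hm)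

lemma gsum_eq (hm : 3 ≤ m) : gsum m (-(π/2) + π/(2*m)) = 1 / sig m := by
  have h0 := hmpos hm
  have hpi := Real.pi_pos
  have hm0 : (m:ℝ) ≠ 0 := by linarith
  set c : ℝ := π / (2*m) with hc
  set E : ℂ := Complex.exp ((c:ℝ) * Complex.I) with hE
  set E' : ℂ := Complex.exp (-(c:ℝ) * Complex.I) with hE'
  have hEE' : E * E' = 1 := by
    rw [hE, hE', ← Complex.exp_add, show ((c:ℝ):ℂ) * Complex.I + -(c:ℝ) * Complex.I = 0 by push_cast; ring, Complex.exp_zero]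
  have hζE : zeta m = E * E := by
    have hcc : ((c:ℝ):ℂ) = (π:ℂ)/(2*(m:ℂ)) := by rw [hc]; push_cast; ring
    have hmc : (m:ℂ) ≠ 0 := by exact_mod_cast hm0
    rw [zeta, hE, hcc, ← Complex.exp_add]
    congr 1
    field_simp
    ring
  have hF : Complex.exp (((-(π/2):ℝ)) * Complex.I) = -Complex.I := by
    rw [Complex.exp_mul_I, ← Complex.ofReal_cos, ← Complex.ofReal_sin,
      Real.cos_neg, Real.sin_neg, Real.cos_pi_div_two, Real.sin_pi_div_two]
    push_cast
    ring
  have hsigc : (sig m : ℂ) = (E' - E) * Complex.I / 2 := by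
    rw [sig, ← hc, Complex.ofReal_sin, Complex.sin, hE, hE']
  have key : Complex.exp ((↑(-(π/2) + c) : ℂ) * Complex.I) * (-2) * (sig m : ℂ)
      = zeta m - 1 := by
    have hsplit : Complex.exp ((↑(-(π/2) + c) : ℂ) * Complex.I)
        = Complex.exp (((-(π/2):ℝ)) * Complex.I) * E := by
      rw [hE, ← Complex.exp_add]
      congr 1
      push_cast
      ring
    rw [hsplit, hF, hsigc, hζE]
    linear_combination (E * E' - E^2) * Complex.I_sq - hEE'
  have hσ := sig_pos hm
  have hσ0 : (sig m : ℂ) ≠ 0 := by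
    exact_mod_cast ne_of_gt hσ
  have hcs : (∑ k ∈ range m, Complex.exp (((-(π/2) + c) + k * π / m : ℝ) * Complex.I))
      = ((1 / sig m : ℝ) : ℂ) := by
    rw [sum_exp_single hm, div_eq_iff (zeta_sub_one_ne hm)]
    push_cast
    rw [← key]
    field_simp
    rw [neg_inj]; congr 1; push_cast; ring
  -- now take real parts
  have habs : ∀ k ∈ range m, |Real.cos ((-(π/2) + c) + k * π / m)|
      = Real.cos ((-(π/2) + c) + k * π / m) := by
    intro k hk
    rw [Finset.mem_range] at hk
    apply abs_of_nonneg
    apply Real.cos_nonneg_of_mem_Icc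
    have hcpos : 0 < c := by rw [hc]; positivity
    constructor
    · have : (0:ℝ) ≤ k * π / m := by positivity
      linarith
    · have hk' : (k:ℝ) ≤ (m:ℝ) - 1 := by
        have : (k:ℝ) + 1 ≤ m := by exact_mod_cast hk
        linarith
      have h3 : (k:ℝ) * π / m ≤ ((m:ℝ) - 1) * π / m := by gcongr
      have h4 : ((m:ℝ) - 1) * π / m = π - π / m := by field_simp
      have h5 : c = π / m / 2 := by rw [hc]; ring
      have h6 : 0 < π / m := by positivity
      linarith
  rw [gsum, Finset.sum_congr rfl habs]
  have hre : ∑ k ∈ range m, Real.cos ((-(π/2) + c) + k * π / m)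
      = (∑ k ∈ range m, Complex.exp (((-(π/2) + c) + k * π / m : ℝ) * Complex.I)).re := by
    rw [Complex.re_sum]
    exact Finset.sum_congr rfl fun k _ => (Complex.exp_ofReal_mul_I_re _).symm
  rw [hre, hcs, Complex.ofReal_re]

end keq

section reidx
variable {m : ℕ}

lemma abs_cos_add_nat_mul_pi (x : ℝ) (n : ℕ) : |Real.cos (x + n * π)| = |Real.cos x| := by
  induction n with
  | zero => simp
  | succ k ih =>
    push_cast
    rw [show x + ((k:ℝ) + 1) * π = (x + (k:ℝ) * π) + π by ring, Real.cos_add_pi, abs_neg]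
    exact ih

lemma mul_mod_helper (m c a : ℕ) : c * (a % m) % m = c * a % m := by
  rw [Nat.mul_mod, Nat.mod_mod_of_dvd _ (dvd_refl m), ← Nat.mul_mod]

lemma sum_abs_cos_double (hm : 3 ≤ m) (hodd : Odd m) (ψ : ℝ) :
    ∑ j ∈ range m, |Real.cos (ψ + (2*j) * π / m)| = gsum m ψ := by
  have hm0 : 0 < m := by omega
  have h2 : 2 ∣ m + 1 := by
    obtain ⟨t, ht⟩ := hodd
    omega
  rw [gsum]
  refine Finset.sum_nbij' (fun j => 2 * j % m) (fun k => (m+1)/2 * k % m) ?_ ?_ ?_ ?_ ?_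
  · intro a _
    exact Finset.mem_range.mpr (Nat.mod_lt _ hm0)
  · intro a _
    exact Finset.mem_range.mpr (Nat.mod_lt _ hm0)
  · intro a ha
    rw [Finset.mem_range] at ha
    show (m+1)/2 * (2 * a % m) % m = a
    rw [mul_mod_helper, ← mul_assoc, Nat.div_mul_cancel h2, add_mul, one_mul,
      Nat.mul_add_mod, Nat.mod_eq_of_lt ha]
  · intro a ha
    rw [Finset.mem_range] at ha
    show 2 * ((m+1)/2 * a % m) % m = a
    rw [mul_mod_helper, ← mul_assoc, Nat.mul_div_cancel' h2, add_mul, one_mul,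
      Nat.mul_add_mod, Nat.mod_eq_of_lt ha]
  · intro a _
    show |Real.cos (ψ + 2 * (a:ℝ) * π / m)| = |Real.cos (ψ + ((2 * a % m : ℕ) : ℝ) * π / m)|
    have h' : 2 * a = m * (2 * a / m) + 2 * a % m := (Nat.div_add_mod _ _).symm
    have hcast : 2 * (a:ℝ) = (m:ℝ) * ((2*a/m : ℕ):ℝ) + ((2*a % m : ℕ):ℝ) := by
      exact_mod_cast congrArg (Nat.cast : ℕ → ℝ) h'
    have hm0' : (m:ℝ) ≠ 0 := by
      have := hmpos hm; linarith
    have hreal : ψ + 2 * (a:ℝ) * π / m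
        = (ψ + ((2 * a % m : ℕ):ℝ) * π / m) + ((2 * a / m : ℕ):ℝ) * π := by
      field_simp
      linear_combination π * hcast
    rw [hreal, abs_cos_add_nat_mul_pi]

lemma sum_exp_double (hm : 3 ≤ m) (χ : ℝ) :
    ∑ j ∈ range m, Complex.exp ((χ + (2*j) * π / m : ℝ) * Complex.I) = 0 := by
  have h0 : (m:ℂ) ≠ 0 := by simp; omega
  set ω : ℂ := zeta m ^ 2 with hω
  have hω_exp : ω = Complex.exp (2 * π / m * Complex.I) := by
    rw [hω, zeta, ← Complex.exp_nat_mul]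
    congr 1
    push_cast
    ring
  have hω_ne : ω ≠ 1 := by
    intro h
    rw [hω_exp, Complex.exp_eq_one_iff] at h
    obtain ⟨n, hn⟩ := h
    have hn' : ((2 * π / m : ℝ) : ℂ) * Complex.I = ((n * (2 * π) : ℝ) : ℂ) * Complex.I := by
      push_cast
      rw [hn]
      push_cast
      ring
    have hr : (2 * π / m : ℝ) = n * (2 * π) := by
      have := mul_right_cancel₀ Complex.I_ne_zero hn'
      exact_mod_cast this
    have h0 := hmpos hm
    have hpi := Real.pi_pos
    have h3 : (3:ℝ) ≤ m := by exact_mod_cast hm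
    have h1 : 0 < 2 * π / m := by positivity
    have h2 : 2 * π / m < 2 * π := by
      rw [div_lt_iff₀ h0]
      nlinarith
    rcases le_or_gt n 0 with hn0 | hn0
    · have : (n:ℝ) ≤ 0 := by exact_mod_cast hn0
      nlinarith
    · have : (1:ℝ) ≤ n := by exact_mod_cast hn0
      nlinarith
  have hωm : ω ^ m = 1 := by
    rw [hω, ← pow_mul, mul_comm, pow_mul, zeta_pow hm]
    simp
  have hterm : ∀ j : ℕ, Complex.exp ((χ + (2*j) * π / m : ℝ) * Complex.I)
      = Complex.exp ((χ:ℝ) * Complex.I) * ω ^ j := by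
    intro j
    rw [hω_exp, ← Complex.exp_nat_mul, ← Complex.exp_add]
    congr 1
    push_cast
    field_simp
  simp only [hterm, ← Finset.mul_sum]
  rw [geom_sum_eq hω_ne, hωm]
  simp

lemma sum_cos_double (hm : 3 ≤ m) (χ : ℝ) :
    ∑ j ∈ range m, Real.cos (χ + (2*j) * π / m) = 0 := by
  have h := congrArg Complex.re (sum_exp_double hm χ)
  rw [Complex.re_sum, Complex.zero_re] at h
  rw [← h]
  exact Finset.sum_congr rfl fun j _ => (Complex.exp_ofReal_mul_I_re _).symm

end reidx

section mainineq
variable {m : ℕ}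

lemma main_sum_bound (hm : 3 ≤ m) (hodd : Odd m) (p q w : ℝ) (hp : p^2 ≤ q^2 + w^2) :
    ∑ j ∈ range m, |p + Real.cos ((2*j) * π / m) * q + Real.sin ((2*j) * π / m) * w|
      ≤ Real.sqrt (q^2 + w^2) / sig m + ((m:ℝ) - 1 / sig m) * |p| := by
  have hσ := sig_pos hm
  set R : ℝ := Real.sqrt (q^2 + w^2) with hRdef
  have hR0 : 0 ≤ R := Real.sqrt_nonneg _
  have hpR : |p| ≤ R := by
    rw [hRdef, ← Real.sqrt_sq_eq_abs]
    exact Real.sqrt_le_sqrt hp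
  rcases eq_or_lt_of_le hR0 with hR | hR
  · -- R = 0 : q = w = 0 and p = 0
    have hqw : q^2 + w^2 ≤ 0 := Real.sqrt_eq_zero'.mp hR.symm
    have hq : q = 0 := by nlinarith [sq_nonneg q, sq_nonneg w]
    have hw : w = 0 := by nlinarith [sq_nonneg q, sq_nonneg w]
    have hp0 : p = 0 := by nlinarith [sq_nonneg p]
    simp [hq, hw, hp0, ← hR]
  · -- R > 0
    set z : ℂ := (q : ℂ) + (w : ℂ) * Complex.I with hz
    have hzre : z.re = q := by simp [hz]
    have hzim : z.im = w := by simp [hz]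
    have habs : ‖z‖ = R := by
      rw [Complex.norm_def, Complex.normSq_apply, hzre, hzim, hRdef]
      ring_nf
    have hz0 : z ≠ 0 := by
      intro h
      rw [h, norm_zero] at habs
      exact absurd habs (ne_of_lt hR)
    set φ := Complex.arg z with hφ
    have hcosφ : q = R * Real.cos φ := by
      rw [hφ, Complex.cos_arg hz0, hzre, habs]
      field_simp
    have hsinφ : w = R * Real.sin φ := by
      rw [hφ, Complex.sin_arg, hzim, habs]
      field_simp
    set s : ℝ := if 0 ≤ p then -φ else -φ + π with hs
    have hterm : ∀ j : ℕ, |p + Real.cos ((2*j) * π / m) * q + Real.sin ((2*j) * π / m) * w|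
        = abs (|p| + R * Real.cos (s + (2*j) * π / m)) := by
      intro j
      set θ := (2*(j:ℝ)) * π / m with hθ
      rcases le_or_gt 0 p with hp0 | hp0
      · rw [hs, if_pos hp0, abs_of_nonneg hp0]
        congr 1
        rw [show -φ + θ = θ - φ by ring, Real.cos_sub, hcosφ, hsinφ]
        ring
      · rw [hs, if_neg (not_le.mpr hp0), abs_of_neg hp0]
        rw [show -φ + π + θ = (θ - φ) + π by ring, Real.cos_add_pi, Real.cos_sub,
          hcosφ, hsinφ]
        rw [show -p + R * -(Real.cos θ * Real.cos φ + Real.sin θ * Real.sin φ)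
          = -(p + (Real.cos θ * (R * Real.cos φ) + Real.sin θ * (R * Real.sin φ))) by ring, abs_neg]
        congr 1
        ring
    have hbound : ∀ j : ℕ, abs (|p| + R * Real.cos (s + (2*j) * π / m))
        ≤ (R - |p|) * |Real.cos (s + (2*j) * π / m)| + |p| * (1 + Real.cos (s + (2*j) * π / m)) := by
      intro j
      set α := s + (2*(j:ℝ)) * π / m
      have hid : |p| + R * Real.cos α = (R - |p|) * Real.cos α + |p| * (1 + Real.cos α) := by ring
      rw [hid]
      refine (abs_add_le _ _).trans ?_
      rw [abs_mul, abs_mul, abs_of_nonneg (by linarith : (0:ℝ) ≤ R - |p|),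
        abs_abs, abs_of_nonneg (by nlinarith [Real.neg_one_le_cos α] : (0:ℝ) ≤ 1 + Real.cos α)]
    calc ∑ j ∈ range m, |p + Real.cos ((2*j) * π / m) * q + Real.sin ((2*j) * π / m) * w|
        = ∑ j ∈ range m, abs (|p| + R * Real.cos (s + (2*j) * π / m)) :=
          Finset.sum_congr rfl fun j _ => hterm j
      _ ≤ ∑ j ∈ range m, ((R - |p|) * |Real.cos (s + (2*j) * π / m)|
            + |p| * (1 + Real.cos (s + (2*j) * π / m))) :=
          Finset.sum_le_sum fun j _ => hbound j
      _ = (R - |p|) * (∑ j ∈ range m, |Real.cos (s + (2*j) * π / m)|)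
            + |p| * ((m:ℝ) + ∑ j ∈ range m, Real.cos (s + (2*j) * π / m)) := by
          rw [Finset.sum_add_distrib, ← Finset.mul_sum, ← Finset.mul_sum]
          congr 1
          rw [Finset.sum_add_distrib, Finset.sum_const, Finset.card_range, nsmul_eq_mul, mul_one]
      _ ≤ (R - |p|) * (1 / sig m) + |p| * ((m:ℝ) + 0) := by
          gcongr
          · rw [sum_abs_cos_double hm hodd]
            exact gsum_le hm s
          · rw [sum_cos_double hm]
      _ = R / sig m + ((m:ℝ) - 1 / sig m) * |p| := by
          field_simp
          ring

end mainineq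

section frame
variable {m : ℕ}

abbrev E2 := EuclideanSpace ℝ (Fin 2)

lemma inner_harm (m : ℕ) (j : Fin m) (x : E2) :
    (inner ℝ (harmonicFrame m j) x : ℝ)
      = Real.cos ((j:ℕ) * π / m) * x 0 + Real.sin ((j:ℕ) * π / m) * x 1 := by
  simp [harmonicFrame, PiLp.inner_apply, Fin.sum_univ_two, RCLike.inner_apply, conj_trivial]
  ring

lemma inner_coords (x y : E2) : (inner ℝ x y : ℝ) = x 0 * y 0 + x 1 * y 1 := by
  simp [PiLp.inner_apply, Fin.sum_univ_two, RCLike.inner_apply, conj_trivial]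
  ring

lemma norm_sq_coords (x : E2) : ‖x‖^2 = x 0^2 + x 1^2 := by
  rw [EuclideanSpace.norm_eq, Real.sq_sqrt (by positivity)]
  simp [Fin.sum_univ_two, sq_abs]

end frame

section frame2
variable {m : ℕ}

lemma double_angle_prod (i : ℕ) (mm : ℕ) (x0 x1 y0 y1 : ℝ) :
    (Real.cos (i * π / mm) * x0 + Real.sin (i * π / mm) * x1)
      * (Real.cos (i * π / mm) * y0 + Real.sin (i * π / mm) * y1)
    = 1/2 * ((x0*y0 + x1*y1) + Real.cos ((2*i) * π / mm) * (x0*y0 - x1*y1)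
        + Real.sin ((2*i) * π / mm) * (x0*y1 + x1*y0)) := by
  rw [show (2*(i:ℝ)) * π / mm = 2 * ((i:ℝ) * π / mm) by ring, Real.cos_two_mul', Real.sin_two_mul]
  have hpy := Real.sin_sq_add_cos_sq ((i:ℝ) * π / mm)
  linear_combination ((x0*y0 + x1*y1)/2) * hpy

lemma sum_inner_mul (hm : 3 ≤ m) (x y : E2) :
    ∑ j : Fin m, (inner ℝ (harmonicFrame m j) x : ℝ) * (inner ℝ (harmonicFrame m j) y : ℝ)
      = (m:ℝ)/2 * (x 0 * y 0 + x 1 * y 1) := by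
  have hstep : ∀ j : Fin m,
      (inner ℝ (harmonicFrame m j) x : ℝ) * (inner ℝ (harmonicFrame m j) y : ℝ)
      = (fun i : ℕ => 1/2 * ((x 0*y 0 + x 1*y 1)
          + Real.cos ((2*i) * π / m) * (x 0*y 0 - x 1*y 1)
          + Real.sin ((2*i) * π / m) * (x 0*y 1 + x 1*y 0))) (j:ℕ) := by
    intro j
    rw [inner_harm, inner_harm]
    exact double_angle_prod j m (x 0) (x 1) (y 0) (y 1)
  rw [Finset.sum_congr rfl (fun j _ => hstep j),
    Fin.sum_univ_eq_sum_range (fun i : ℕ => 1/2 * ((x 0*y 0 + x 1*y 1)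
          + Real.cos ((2*i) * π / m) * (x 0*y 0 - x 1*y 1)
          + Real.sin ((2*i) * π / m) * (x 0*y 1 + x 1*y 0))) m]
  have hc := sum_cos_double hm 0
  have hs : ∑ j ∈ range m, Real.sin ((2*j) * π / m) = 0 := by
    have h := congrArg Complex.im (sum_exp_double hm 0)
    rw [Complex.im_sum, Complex.zero_im] at h
    rw [← h]
    refine Finset.sum_congr rfl fun j _ => ?_
    rw [Complex.exp_ofReal_mul_I_im]
    norm_num
  have hc' : ∑ j ∈ range m, Real.cos ((2*j) * π / m) = 0 := by
    rw [← hc]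
    exact Finset.sum_congr rfl fun j _ => by norm_num
  have hpt : ∀ i ∈ range m, 1/2 * ((x 0*y 0 + x 1*y 1)
          + Real.cos ((2*i) * π / m) * (x 0*y 0 - x 1*y 1)
          + Real.sin ((2*i) * π / m) * (x 0*y 1 + x 1*y 0))
      = 1/2 * (x 0*y 0 + x 1*y 1)
          + (x 0*y 0 - x 1*y 1)/2 * Real.cos ((2*i) * π / m)
          + (x 0*y 1 + x 1*y 0)/2 * Real.sin ((2*i) * π / m) := fun i _ => by ring
  rw [Finset.sum_congr rfl hpt, Finset.sum_add_distrib, Finset.sum_add_distrib,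
    ← Finset.mul_sum, ← Finset.mul_sum, hc', ← Finset.mul_sum, hs, Finset.sum_const, Finset.card_range,
    nsmul_eq_mul]
  ring

end frame2

section frame3
variable {m : ℕ}

lemma min_norm_sq (x y : E2) :
    (min ‖x - y‖ ‖x + y‖)^2 = ‖x‖^2 + ‖y‖^2 - 2 * |(inner ℝ x y : ℝ)| := by
  have h1 : ‖x - y‖^2 = ‖x‖^2 + ‖y‖^2 - 2 * (inner ℝ x y : ℝ) := by
    rw [@norm_sub_sq_real]; ring
  have h2 : ‖x + y‖^2 = ‖x‖^2 + ‖y‖^2 + 2 * (inner ℝ x y : ℝ) := by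
    rw [@norm_add_sq_real]; ring
  have hmin : (min ‖x - y‖ ‖x + y‖)^2 = min (‖x - y‖^2) (‖x + y‖^2) := by
    rcases le_total ‖x - y‖ ‖x + y‖ with h | h
    · rw [min_eq_left h, min_eq_left (by nlinarith [norm_nonneg (x-y), norm_nonneg (x+y)])]
    · rw [min_eq_right h, min_eq_right (by nlinarith [norm_nonneg (x-y), norm_nonneg (x+y)])]
  rw [hmin, h1, h2]
  rcases le_or_gt 0 ((inner ℝ x y : ℝ)) with h | h
  · rw [abs_of_nonneg h, min_eq_left (by linarith)]
  · rw [abs_of_neg h, min_eq_right (by linarith)]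
    ring

lemma phiDist_sq (hm : 3 ≤ m) (x y : E2) :
    phiDist (harmonicFrame m) x y ^ 2
      = (m:ℝ)/2 * (‖x‖^2 + ‖y‖^2)
        - ∑ j ∈ range m, |(x 0*y 0 + x 1*y 1)
            + Real.cos ((2*j) * π / m) * (x 0*y 0 - x 1*y 1)
            + Real.sin ((2*j) * π / m) * (x 0*y 1 + x 1*y 0)| := by
  rw [phiDist, Real.sq_sqrt (Finset.sum_nonneg fun i _ => sq_nonneg _)]
  have hpt : ∀ j : Fin m,
      (|(inner ℝ (harmonicFrame m j) x : ℝ)| - |(inner ℝ (harmonicFrame m j) y : ℝ)|) ^ 2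
      = (inner ℝ (harmonicFrame m j) x : ℝ) * (inner ℝ (harmonicFrame m j) x : ℝ)
        + (inner ℝ (harmonicFrame m j) y : ℝ) * (inner ℝ (harmonicFrame m j) y : ℝ)
        - |2 * ((inner ℝ (harmonicFrame m j) x : ℝ) * (inner ℝ (harmonicFrame m j) y : ℝ))| := by
    intro j
    set u := (inner ℝ (harmonicFrame m j) x : ℝ)
    set v := (inner ℝ (harmonicFrame m j) y : ℝ)
    have : |2 * (u * v)| = 2 * (|u| * |v|) := by
      rw [abs_mul, abs_mul, abs_two]
    rw [this]
    have hu : |u|^2 = u * u := by rw [sq_abs]; ring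
    have hv : |v|^2 = v * v := by rw [sq_abs]; ring
    nlinarith [hu, hv]
  rw [Finset.sum_congr rfl (fun j _ => hpt j)]
  rw [Finset.sum_sub_distrib, Finset.sum_add_distrib, sum_inner_mul hm x x, sum_inner_mul hm y y]
  have habs : ∀ j : Fin m, |2 * ((inner ℝ (harmonicFrame m j) x : ℝ) * (inner ℝ (harmonicFrame m j) y : ℝ))|
      = (fun i : ℕ => |(x 0*y 0 + x 1*y 1)
            + Real.cos ((2*i) * π / m) * (x 0*y 0 - x 1*y 1)
            + Real.sin ((2*i) * π / m) * (x 0*y 1 + x 1*y 0)|) (j:ℕ) := by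
    intro j
    simp only
    congr 1
    rw [inner_harm, inner_harm, double_angle_prod j m (x 0) (x 1) (y 0) (y 1)]
    ring
  rw [Finset.sum_congr rfl (fun j _ => habs j),
    Fin.sum_univ_eq_sum_range (fun i : ℕ => |(x 0*y 0 + x 1*y 1)
            + Real.cos ((2*i) * π / m) * (x 0*y 0 - x 1*y 1)
            + Real.sin ((2*i) * π / m) * (x 0*y 1 + x 1*y 0)|) m]
  rw [norm_sq_coords, norm_sq_coords]
  ring

lemma phiDist_sq_le (hm : 3 ≤ m) (x y : E2) :
    phiDist (harmonicFrame m) x y ^ 2 ≤ (m:ℝ)/2 * (min ‖x - y‖ ‖x + y‖)^2 := by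
  rw [phiDist_sq hm, min_norm_sq, inner_coords]
  set p := x 0*y 0 + x 1*y 1 with hp
  have hlow : (m:ℝ) * |p| ≤ ∑ j ∈ range m, |p
            + Real.cos ((2*j) * π / m) * (x 0*y 0 - x 1*y 1)
            + Real.sin ((2*j) * π / m) * (x 0*y 1 + x 1*y 0)| := by
    have h1 : |∑ j ∈ range m, (p
            + Real.cos ((2*j) * π / m) * (x 0*y 0 - x 1*y 1)
            + Real.sin ((2*j) * π / m) * (x 0*y 1 + x 1*y 0))|
        ≤ ∑ j ∈ range m, |p
            + Real.cos ((2*j) * π / m) * (x 0*y 0 - x 1*y 1)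
            + Real.sin ((2*j) * π / m) * (x 0*y 1 + x 1*y 0)| :=
      Finset.abs_sum_le_sum_abs _ _
    have h2 : ∑ j ∈ range m, (p
            + Real.cos ((2*j) * π / m) * (x 0*y 0 - x 1*y 1)
            + Real.sin ((2*j) * π / m) * (x 0*y 1 + x 1*y 0)) = (m:ℝ) * p := by
      have hc := sum_cos_double hm 0
      have hc' : ∑ j ∈ range m, Real.cos ((2*j) * π / m) = 0 := by
        rw [← hc]
        exact Finset.sum_congr rfl fun j _ => by norm_num
      have hs : ∑ j ∈ range m, Real.sin ((2*j) * π / m) = 0 := by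
        have h := congrArg Complex.im (sum_exp_double hm 0)
        rw [Complex.im_sum, Complex.zero_im] at h
        rw [← h]
        refine Finset.sum_congr rfl fun j _ => ?_
        rw [Complex.exp_ofReal_mul_I_im]
        norm_num
      rw [Finset.sum_add_distrib, Finset.sum_add_distrib, ← Finset.sum_mul, ← Finset.sum_mul,
        hc', hs, Finset.sum_const, Finset.card_range, nsmul_eq_mul]
      ring
    rw [h2] at h1
    calc (m:ℝ) * |p| = |(m:ℝ) * p| := by
          rw [abs_mul, abs_of_nonneg (by positivity : (0:ℝ) ≤ (m:ℝ))]
      _ ≤ _ := h1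
  nlinarith [hlow]

end frame3

section frame4
variable {m : ℕ}

lemma phiDist_sq_ge (hm : 3 ≤ m) (hodd : Odd m) (x y : E2) :
    ((m:ℝ)/2 - 1/(2 * sig m)) * (min ‖x - y‖ ‖x + y‖)^2
      ≤ phiDist (harmonicFrame m) x y ^ 2 := by
  have hσ := sig_pos hm
  rw [phiDist_sq hm, min_norm_sq, inner_coords]
  set p := x 0*y 0 + x 1*y 1 with hpdef
  set q := x 0*y 0 - x 1*y 1 with hqdef
  set w := x 0*y 1 + x 1*y 0 with hwdef
  have hp : p^2 ≤ q^2 + w^2 := by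
    rw [hpdef, hqdef, hwdef]
    nlinarith [sq_nonneg (x 0 * y 1 - x 1 * y 0)]
  have hS := main_sum_bound hm hodd p q w hp
  have hsqrt : Real.sqrt (q^2 + w^2) ≤ (‖x‖^2 + ‖y‖^2)/2 := by
    have hqw : q^2 + w^2 = (x 0^2 + x 1^2) * (y 0^2 + y 1^2) := by
      rw [hqdef, hwdef]; ring
    rw [hqw, norm_sq_coords, norm_sq_coords]
    set A := x 0^2 + x 1^2 with hA
    set B := y 0^2 + y 1^2 with hB
    have hA0 : 0 ≤ A := by rw [hA]; positivity
    have hB0 : 0 ≤ B := by rw [hB]; positivity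
    calc Real.sqrt (A * B) ≤ Real.sqrt (((A+B)/2)^2) :=
          Real.sqrt_le_sqrt (by nlinarith [sq_nonneg (A - B)])
      _ = (A+B)/2 := Real.sqrt_sq (by positivity)
  set N := ‖x‖^2 + ‖y‖^2 with hN
  have hS2 : ∑ j ∈ range m, |p + Real.cos ((2*j) * π / m) * q + Real.sin ((2*j) * π / m) * w|
      ≤ N/2 / sig m + ((m:ℝ) - 1/sig m) * |p| := by
    refine hS.trans ?_
    gcongr
  have key : ((m:ℝ)/2 - 1/(2 * sig m)) * (N - 2*|p|)
      = (m:ℝ)/2 * N - (N/2 / sig m + ((m:ℝ) - 1/sig m) * |p|) := by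
    field_simp
    ring
  linarith [hS2, key]

lemma ratio_bounds (hm : 3 ≤ m) (hodd : Odd m) {r : ℝ}
    (hr : r ∈ ratioSet (harmonicFrame m)) :
    Real.sqrt ((m:ℝ)/2 - 1/(2 * sig m)) ≤ r ∧ r ≤ Real.sqrt ((m:ℝ)/2) := by
  obtain ⟨x, y, hd, hreq⟩ := hr
  set d := min ‖x - y‖ ‖x + y‖ with hddef
  have hd0 : 0 < d := by
    have h0 : (0:ℝ) ≤ d := le_min (norm_nonneg (x - y)) (norm_nonneg (x + y))
    exact lt_of_le_of_ne h0 (Ne.symm hd)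
  have hphi0 : 0 ≤ phiDist (harmonicFrame m) x y := Real.sqrt_nonneg _
  constructor
  · rw [hreq, le_div_iff₀ hd0]
    have h1 : (Real.sqrt ((m:ℝ)/2 - 1/(2 * sig m)) * d)^2
        = ((m:ℝ)/2 - 1/(2 * sig m)) * d^2 := by
      rw [mul_pow, Real.sq_sqrt ?_]
      have := one_lt_m_sig hm
      have hσ := sig_pos hm
      rw [sub_nonneg, div_le_div_iff₀ (by positivity) (by norm_num)]
      nlinarith
    have h2 := phiDist_sq_ge hm hodd x y
    have h3 : (Real.sqrt ((m:ℝ)/2 - 1/(2 * sig m)) * d)^2 ≤ phiDist (harmonicFrame m) x y ^2 := by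
      rw [h1]; exact h2
    nlinarith [mul_nonneg (Real.sqrt_nonneg ((m:ℝ)/2 - 1/(2 * sig m))) hd0.le, hphi0]
  · rw [hreq, div_le_iff₀ hd0]
    have h1 : (Real.sqrt ((m:ℝ)/2) * d)^2 = (m:ℝ)/2 * d^2 := by
      rw [mul_pow, Real.sq_sqrt (by positivity)]
    have h2 := phiDist_sq_le hm x y
    nlinarith [mul_nonneg (Real.sqrt_nonneg ((m:ℝ)/2)) hd0.le, hphi0]

end frame4

section mem
variable {m : ℕ}

lemma U_mem (hm : 3 ≤ m) : Real.sqrt ((m:ℝ)/2) ∈ ratioSet (harmonicFrame m) := by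
  set x : E2 := (EuclideanSpace.equiv (Fin 2) ℝ).symm ![1, 0] with hx
  have hx0 : x 0 = 1 := rfl
  have hx1 : x 1 = 0 := rfl
  have hnx : ‖x‖^2 = 1 := by rw [norm_sq_coords, hx0, hx1]; norm_num
  have hnx' : ‖x‖ = 1 := by
    have h0 : 0 ≤ ‖x‖ := norm_nonneg x
    nlinarith
  refine ⟨x, 0, ?_, ?_⟩
  · rw [sub_zero, add_zero, min_self, hnx']
    norm_num
  · rw [sub_zero, add_zero, min_self, hnx', div_one]
    have hphi : phiDist (harmonicFrame m) x 0 ^ 2 = (m:ℝ)/2 := by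
      rw [phiDist, Real.sq_sqrt (Finset.sum_nonneg fun i _ => sq_nonneg _)]
      have hpt : ∀ j : Fin m,
          (|(inner ℝ (harmonicFrame m j) x : ℝ)| - |(inner ℝ (harmonicFrame m j) (0:E2) : ℝ)|) ^ 2
          = (inner ℝ (harmonicFrame m j) x : ℝ) * (inner ℝ (harmonicFrame m j) x : ℝ) := by
        intro j
        rw [inner_zero_right]
        simp [sq_abs, sq]
      rw [Finset.sum_congr rfl (fun j _ => hpt j), sum_inner_mul hm x x, hx0, hx1]
      norm_num
    have hphi0 : 0 ≤ phiDist (harmonicFrame m) x 0 := Real.sqrt_nonneg _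
    have hsq : Real.sqrt ((m:ℝ)/2) ^ 2 = (m:ℝ)/2 := Real.sq_sqrt (by positivity)
    nlinarith [Real.sqrt_nonneg ((m:ℝ)/2)]

lemma L_mem (hm : 3 ≤ m) (hodd : Odd m) :
    Real.sqrt ((m:ℝ)/2 - 1/(2 * sig m)) ∈ ratioSet (harmonicFrame m) := by
  have hσ := sig_pos hm
  have hmσ := one_lt_m_sig hm
  have h0 := hmpos hm
  set α : ℝ := -(π/(4*m)) with hα
  set x : E2 := (EuclideanSpace.equiv (Fin 2) ℝ).symm ![Real.cos α, Real.sin α] with hx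
  set y : E2 := (EuclideanSpace.equiv (Fin 2) ℝ).symm ![-Real.sin α, Real.cos α] with hy
  have hx0 : x 0 = Real.cos α := rfl
  have hx1 : x 1 = Real.sin α := rfl
  have hy0 : y 0 = -Real.sin α := rfl
  have hy1 : y 1 = Real.cos α := rfl
  have hpy := Real.sin_sq_add_cos_sq α
  have hnx : ‖x‖^2 = 1 := by rw [norm_sq_coords, hx0, hx1]; nlinarith
  have hny : ‖y‖^2 = 1 := by rw [norm_sq_coords, hy0, hy1]; nlinarith
  have hip : (inner ℝ x y : ℝ) = 0 := by
    rw [inner_coords, hx0, hx1, hy0, hy1]; ring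
  have hmin_sq : (min ‖x - y‖ ‖x + y‖)^2 = 2 := by
    rw [min_norm_sq, hnx, hny, hip]
    norm_num
  have hminpos : 0 ≤ min ‖x - y‖ ‖x + y‖ := le_min (norm_nonneg _) (norm_nonneg _)
  have hmin : min ‖x - y‖ ‖x + y‖ = Real.sqrt 2 := by
    rw [← Real.sqrt_sq hminpos, hmin_sq]
  have hd0 : min ‖x - y‖ ‖x + y‖ ≠ 0 := by
    rw [hmin]
    positivity
  refine ⟨x, y, hd0, ?_⟩
  -- compute phiDist^2
  have hsum : ∀ j ∈ range m,
      |(x 0*y 0 + x 1*y 1) + Real.cos ((2*j) * π / m) * (x 0*y 0 - x 1*y 1)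
        + Real.sin ((2*j) * π / m) * (x 0*y 1 + x 1*y 0)|
      = |Real.cos ((-(π/2) + π/(2*m)) + (2*j) * π / m)| := by
    intro j _
    set θ := (2*(j:ℝ)) * π / m with hθ
    have harg : (-(π/2) + π/(2*m)) + θ = (θ + π/(2*m)) - π/2 := by ring
    rw [harg, Real.cos_sub_pi_div_two]
    congr 1
    have hid : (Real.cos α * (-Real.sin α) + Real.sin α * Real.cos α)
        + Real.cos θ * (Real.cos α * (-Real.sin α) - Real.sin α * Real.cos α)
        + Real.sin θ * (Real.cos α * Real.cos α + Real.sin α * (-Real.sin α))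
        = Real.sin (θ - 2*α) := by
      rw [Real.sin_sub, Real.sin_two_mul, Real.cos_two_mul']
      ring
    rw [hx0, hx1, hy0, hy1, hid, show θ - 2*α = θ + π/(2*m) by rw [hα]; ring]
  have hphisq : phiDist (harmonicFrame m) x y ^ 2 = (m:ℝ) - 1/sig m := by
    rw [phiDist_sq hm, Finset.sum_congr rfl hsum, sum_abs_cos_double hm hodd, gsum_eq hm,
      hnx, hny]
    ring
  have hphi0 : 0 ≤ phiDist (harmonicFrame m) x y := Real.sqrt_nonneg _
  have hphi : phiDist (harmonicFrame m) x y = Real.sqrt ((m:ℝ) - 1/sig m) := by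
    rw [← Real.sqrt_sq hphi0, hphisq]
  rw [hphi, hmin, ← Real.sqrt_div (by rw [sub_nonneg, div_le_iff₀ hσ]; nlinarith)]
  congr 1
  field_simp

end mem

theorem stmt3 (m : ℕ) (hm : 3 ≤ m) (hodd : Odd m) :
    LA (harmonicFrame m) = Real.sqrt ((m : ℝ) / 2 - 1 / (2 * Real.sin (π / (2 * m)))) ∧
    UA (harmonicFrame m) = Real.sqrt ((m : ℝ) / 2) ∧
    UA (harmonicFrame m) / LA (harmonicFrame m) =
      1 / Real.sqrt (1 - 1 / ((m : ℝ) * Real.sin (π / (2 * m)))) := by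
  have hσ := sig_pos hm
  have hmσ := one_lt_m_sig hm
  have h0 := hmpos hm
  have hsig : Real.sin (π / (2 * (m:ℝ))) = sig m := rfl
  rw [hsig]
  have hLA : LA (harmonicFrame m) = Real.sqrt ((m:ℝ)/2 - 1/(2 * sig m)) := by
    apply le_antisymm
    · exact csInf_le ⟨Real.sqrt ((m:ℝ)/2 - 1/(2 * sig m)),
        fun r hr => (ratio_bounds hm hodd hr).1⟩ (L_mem hm hodd)
    · exact le_csInf ⟨_, L_mem hm hodd⟩ fun r hr => (ratio_bounds hm hodd hr).1
  have hUA : UA (harmonicFrame m) = Real.sqrt ((m:ℝ)/2) := by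
    apply le_antisymm
    · exact csSup_le ⟨_, U_mem hm⟩ fun r hr => (ratio_bounds hm hodd hr).2
    · exact le_csSup ⟨Real.sqrt ((m:ℝ)/2),
        fun r hr => (ratio_bounds hm hodd hr).2⟩ (U_mem hm)
  refine ⟨hLA, hUA, ?_⟩
  rw [hLA, hUA]
  have hpos : 0 < 1 - 1/((m:ℝ) * sig m) := by
    rw [sub_pos, div_lt_one (by positivity)]
    exact hmσ
  have hfact : (m:ℝ)/2 - 1/(2 * sig m) = ((m:ℝ)/2) * (1 - 1/((m:ℝ) * sig m)) := by
    field_simp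
  rw [hfact, Real.sqrt_mul (by positivity) _]
  have hne : Real.sqrt ((m:ℝ)/2) ≠ 0 := ne_of_gt (Real.sqrt_pos.mpr (by positivity))
  rw [div_mul_cancel_left₀ hne, one_div]
  ring_nf
end

section
/- Let m ≥ 1 be an integer and let φ_1, φ_2, …, φ_{m+1} be real numbers with 0 = φ_1 ≤ φ_2 ≤ ⋯ ≤ φ_m ≤ φ_{m+1} = π, and let t_1, …, t_m be real numbers. Then there exists θ ∈ [0, π] such that Σ_{i=1}^m t_i²·|sin(θ − φ_i)| ≥ (1/(m·sin(π/(2m))))·Σ_{i=1}^m t_i². -/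
open Real

theorem stmt6 (m : ℕ) (hm : 1 ≤ m) (φ : Fin (m + 1) → ℝ) (t : Fin m → ℝ)
    (hφ0 : φ 0 = 0) (hφlast : φ (Fin.last m) = π) (hφmono : Monotone φ) :
    ∃ θ ∈ Set.Icc (0 : ℝ) π,
      (1 / ((m : ℝ) * Real.sin (π / (2 * m)))) * ∑ i, t i ^ 2 ≤
        ∑ i : Fin m, t i ^ 2 * |Real.sin (θ - φ i.castSucc)| := by
  have hπ := Real.pi_pos
  have hm0 : (0:ℝ) < m := by exact_mod_cast hm
  have hm1 : (1:ℝ) ≤ m := by exact_mod_cast hm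
  obtain ⟨ψ, hψdef⟩ : ∃ ψ : ℕ → ℝ, ∀ k, ψ k = φ ⟨min k m, by omega⟩ :=
    ⟨fun k => φ ⟨min k m, by omega⟩, fun _ => rfl⟩
  have hψ0 : ψ 0 = 0 := by
    rw [hψdef]
    have : (⟨min 0 m, by omega⟩ : Fin (m+1)) = 0 := by ext; simp
    rw [this, hφ0]
  have hψm : ψ m = π := by
    rw [hψdef]
    have : (⟨min m m, by omega⟩ : Fin (m+1)) = Fin.last m := by ext; simp [Fin.last]
    rw [this, hφlast]
  have hψmono : Monotone ψ := by
    intro j k h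
    rw [hψdef, hψdef]
    exact hφmono (by simp only [Fin.mk_le_mk]; omega)
  have hψnn : ∀ k, 0 ≤ ψ k := fun k => hψ0 ▸ hψmono (Nat.zero_le k)
  have hψle : ∀ k, ψ k ≤ π := by
    intro k
    have h1 : ψ k ≤ ψ m := by
      rw [hψdef, hψdef]
      exact hφmono (by simp only [Fin.mk_le_mk]; omega)
    linarith [hψm ▸ h1]
  obtain ⟨L, hLdef⟩ : ∃ L : ℕ → ℝ, ∀ k, L k = ψ (k+1) - ψ k :=
    ⟨_, fun _ => rfl⟩
  obtain ⟨mid, hmiddef⟩ : ∃ mid : ℕ → ℝ, ∀ k, mid k = (ψ k + ψ (k+1)) / 2 :=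
    ⟨_, fun _ => rfl⟩
  obtain ⟨l, hldef⟩ : ∃ l : ℕ → ℝ, ∀ k, l k = Real.sin (L k / 2) :=
    ⟨_, fun _ => rfl⟩
  have hL0 : ∀ k, 0 ≤ L k := fun k => by
    rw [hLdef]; exact sub_nonneg.2 (hψmono (Nat.le_succ k))
  have hLπ : ∀ k, L k ≤ π := fun k => by
    rw [hLdef]; have := hψnn k; have := hψle (k+1); linarith
  have hl0 : ∀ k, 0 ≤ l k := by
    intro k
    rw [hldef]
    apply Real.sin_nonneg_of_nonneg_of_le_pi
    · have := hL0 k; linarith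
    · have := hLπ k; linarith
  have hmid : ∀ k, mid k ∈ Set.Icc (0:ℝ) π := by
    intro k
    constructor
    · rw [hmiddef]; have := hψnn k; have := hψnn (k+1); linarith
    · rw [hmiddef]; have := hψle k; have := hψle (k+1); linarith
  have hLsum : ∑ k ∈ Finset.range m, L k = π := by
    have : ∀ k ∈ Finset.range m, L k = ψ (k+1) - ψ k := fun k _ => hLdef k
    rw [Finset.sum_congr rfl this, Finset.sum_range_sub ψ, hψm, hψ0]
    ring
  have h2m : (2:ℝ) ≤ 2 * m := by linarith
  have hsinpos : 0 < Real.sin (π / (2 * m)) := by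
    apply Real.sin_pos_of_pos_of_lt_pi
    · positivity
    · have h5 : π / (2*(m:ℝ)) ≤ π / 2 :=
        div_le_div_of_nonneg_left hπ.le two_pos h2m
      linarith
  have hms : (0:ℝ) < (m:ℝ) * Real.sin (π / (2 * m)) := by positivity
  have hJ : ∑ k ∈ Finset.range m, l k ≤ (m:ℝ) * Real.sin (π / (2 * m)) := by
    have hcc : ConcaveOn ℝ (Set.Icc 0 π) Real.sin :=
      strictConcaveOn_sin_Icc.concaveOn
    have hjen := hcc.le_map_sum (t := Finset.range m) (w := fun _ => (1:ℝ)/m)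
      (p := fun k => L k / 2)
      (fun i _ => by positivity)
      (by rw [Finset.sum_const, Finset.card_range, nsmul_eq_mul]; field_simp)
      (fun i _ => ⟨by have := hL0 i; linarith, by have := hLπ i; linarith⟩)
    have hsum : ∑ i ∈ Finset.range m, (1/(m:ℝ)) • (L i / 2) = π / (2 * m) := by
      simp only [smul_eq_mul]
      rw [← Finset.mul_sum,
        show ∑ i ∈ Finset.range m, L i / 2 = (∑ i ∈ Finset.range m, L i) / 2 from
          (Finset.sum_div _ _ _).symm, hLsum]
      rw [one_div, inv_mul_eq_div, div_div]
    rw [hsum] at hjen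
    simp only [smul_eq_mul] at hjen
    have h2 : ∑ i ∈ Finset.range m, 1/(m:ℝ) * Real.sin (L i / 2)
        = (1/(m:ℝ)) * ∑ i ∈ Finset.range m, l i := by
      rw [Finset.mul_sum]
      exact Finset.sum_congr rfl fun i _ => by rw [hldef]
    rw [h2] at hjen
    calc ∑ k ∈ Finset.range m, l k
        = (m:ℝ) * ((1/(m:ℝ)) * ∑ k ∈ Finset.range m, l k) := by field_simp
      _ ≤ (m:ℝ) * Real.sin (π / (2*m)) :=
          mul_le_mul_of_nonneg_left hjen (le_of_lt hm0)
  have hcast : ∀ i : Fin m, φ i.castSucc = ψ i.val := by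
    intro i
    rw [hψdef]
    congr 1
    ext
    simp only [Fin.coe_castSucc]
    omega
  -- key per-i inequality
  have key : ∀ i : Fin m,
      2 ≤ ∑ k ∈ Finset.range m, 2 * l k * |Real.sin (mid k - ψ i.val)| := by
    intro i
    obtain ⟨G, hGdef⟩ : ∃ G : ℕ → ℝ, ∀ k, G k = Real.cos (ψ k - ψ i.val) :=
      ⟨_, fun _ => rfl⟩
    have habs : ∀ k, |G (k+1) - G k| = 2 * l k * |Real.sin (mid k - ψ i.val)| := by
      intro k
      have h1 : G (k+1) - G k = -2 * Real.sin (mid k - ψ i.val) * Real.sin (L k / 2) := by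
        rw [hGdef, hGdef, Real.cos_sub_cos, hmiddef, hLdef]
        ring_nf
      rw [h1, hldef]
      rw [show (-2 : ℝ) * Real.sin (mid k - ψ i.val) * Real.sin (L k / 2)
          = -(Real.sin (mid k - ψ i.val) * (2 * Real.sin (L k / 2))) from by ring,
        abs_neg, abs_mul]
      rw [abs_of_nonneg (show (0:ℝ) ≤ 2 * Real.sin (L k / 2) from by
        have := hl0 k; rw [hldef] at this; linarith)]
      ring
    have hGi : G i.val = 1 := by rw [hGdef]; simp
    have hG0 : G 0 = Real.cos (ψ i.val) := by rw [hGdef, hψ0]; simp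
    have hGm : G m = - Real.cos (ψ i.val) := by
      rw [hGdef, hψm, Real.cos_pi_sub]
    have t1 : ∑ k ∈ Finset.range i.val, (G (k+1) - G k) = 1 - Real.cos (ψ i.val) := by
      rw [Finset.sum_range_sub G, hGi, hG0]
    have t2 : ∑ k ∈ Finset.Ico i.val m, (G (k+1) - G k)
        = - Real.cos (ψ i.val) - 1 := by
      have h3 : ∑ k ∈ Finset.range m, (G (k+1) - G k)
          = -Real.cos (ψ i.val) - Real.cos (ψ i.val) := by
        rw [Finset.sum_range_sub G, hGm, hG0]
      have h4 := Finset.sum_Ico_consecutive (fun k => G (k+1) - G k)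
        (Nat.zero_le i.val) (le_of_lt i.isLt)
      rw [← Finset.range_eq_Ico, ← Finset.range_eq_Ico] at h4
      rw [t1] at h4
      rw [h3] at h4
      linarith
    have hsplit : ∑ k ∈ Finset.range i.val, |G (k+1) - G k|
          + ∑ k ∈ Finset.Ico i.val m, |G (k+1) - G k|
        = ∑ k ∈ Finset.range m, |G (k+1) - G k| := by
      have h4 := Finset.sum_Ico_consecutive (fun k => |G (k+1) - G k|)
        (Nat.zero_le i.val) (le_of_lt i.isLt)
      rw [← Finset.range_eq_Ico, ← Finset.range_eq_Ico] at h4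
      exact h4
    have hb1 : 1 - Real.cos (ψ i.val) ≤ ∑ k ∈ Finset.range i.val, |G (k+1) - G k| :=
      calc 1 - Real.cos (ψ i.val) ≤ |1 - Real.cos (ψ i.val)| := le_abs_self _
        _ = |∑ k ∈ Finset.range i.val, (G (k+1) - G k)| := by rw [t1]
        _ ≤ ∑ k ∈ Finset.range i.val, |G (k+1) - G k| := Finset.abs_sum_le_sum_abs _ _
    have hb2 : 1 + Real.cos (ψ i.val) ≤ ∑ k ∈ Finset.Ico i.val m, |G (k+1) - G k| :=
      calc 1 + Real.cos (ψ i.val)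
          ≤ |(- Real.cos (ψ i.val) - 1)| := by
            rw [show - Real.cos (ψ i.val) - 1 = -(1 + Real.cos (ψ i.val)) from by ring,
              abs_neg]
            exact le_abs_self _
        _ = |∑ k ∈ Finset.Ico i.val m, (G (k+1) - G k)| := by rw [t2]
        _ ≤ ∑ k ∈ Finset.Ico i.val m, |G (k+1) - G k| := Finset.abs_sum_le_sum_abs _ _
    have heq : ∑ k ∈ Finset.range m, |G (k+1) - G k|
        = ∑ k ∈ Finset.range m, 2 * l k * |Real.sin (mid k - ψ i.val)| :=
      Finset.sum_congr rfl (fun k _ => habs k)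
    rw [← heq, ← hsplit]
    linarith
  -- choose θ
  have hne : (Finset.range m).Nonempty := ⟨0, Finset.mem_range.2 hm⟩
  obtain ⟨j₀, hj₀mem, hj₀max⟩ := Finset.exists_max_image (Finset.range m)
    (fun j => ∑ i : Fin m, t i ^ 2 * |Real.sin (mid j - φ i.castSucc)|) hne
  refine ⟨mid j₀, hmid j₀, ?_⟩
  obtain ⟨F, hF⟩ : ∃ F : ℝ, F = ∑ i : Fin m, t i ^ 2 * |Real.sin (mid j₀ - φ i.castSucc)| :=
    ⟨_, rfl⟩
  have hF0 : 0 ≤ F := hF ▸ Finset.sum_nonneg fun i _ => by positivity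
  obtain ⟨S, hS⟩ : ∃ S : ℝ, S = ∑ i : Fin m, t i ^ 2 := ⟨_, rfl⟩
  have main : 2 * S ≤ 2 * ((m:ℝ) * Real.sin (π / (2 * m))) * F := by
    have step1 : 2 * S = ∑ i : Fin m, t i ^ 2 * 2 := by
      rw [hS, Finset.mul_sum]
      exact Finset.sum_congr rfl fun i _ => by ring
    have step2 : ∑ i : Fin m, t i ^ 2 * 2
        ≤ ∑ i : Fin m, t i ^ 2 *
            (∑ k ∈ Finset.range m, 2 * l k * |Real.sin (mid k - φ i.castSucc)|) := by
      apply Finset.sum_le_sum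
      intro i _
      apply mul_le_mul_of_nonneg_left _ (sq_nonneg _)
      rw [hcast i]
      exact key i
    have step3 : ∑ i : Fin m, t i ^ 2 *
            (∑ k ∈ Finset.range m, 2 * l k * |Real.sin (mid k - φ i.castSucc)|)
        = ∑ k ∈ Finset.range m, 2 * l k *
            (∑ i : Fin m, t i ^ 2 * |Real.sin (mid k - φ i.castSucc)|) := by
      simp_rw [Finset.mul_sum]
      rw [Finset.sum_comm]
      exact Finset.sum_congr rfl fun k _ => Finset.sum_congr rfl fun i _ => by ring
    have step4 : ∑ k ∈ Finset.range m, 2 * l k *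
            (∑ i : Fin m, t i ^ 2 * |Real.sin (mid k - φ i.castSucc)|)
        ≤ ∑ k ∈ Finset.range m, 2 * l k * F := by
      apply Finset.sum_le_sum
      intro k hk
      have h6 := hj₀max k hk
      apply mul_le_mul_of_nonneg_left _ (by have := hl0 k; linarith)
      rw [hF]
      exact h6
    have step5 : ∑ k ∈ Finset.range m, 2 * l k * F
        = 2 * (∑ k ∈ Finset.range m, l k) * F := by
      rw [Finset.mul_sum, Finset.sum_mul]
    have step6 : 2 * (∑ k ∈ Finset.range m, l k) * F
        ≤ 2 * ((m:ℝ) * Real.sin (π / (2 * m))) * F := by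
      apply mul_le_mul_of_nonneg_right _ hF0
      linarith
    linarith
  rw [← hS, ← hF, one_div, inv_mul_le_iff₀ hms]
  linarith
end

section
/- Let m ≥ 1 be an integer, let t_1, …, t_m be real numbers, and let u_1, …, u_m ∈ ℝ³ be unit vectors (‖u_i‖₂ = 1). Then there exists a unit vector v ∈ ℝ³ (‖v‖₂ = 1) such that (1/2)·Σ_{i=1}^m t_i²·√(1 − ⟨u_i, v⟩²) ≥ (π/8)·Σ_{i=1}^m t_i². -/
open Real MeasureTheory

namespace Stmt11Aux

noncomputable section

local notation "E3" => EuclideanSpace ℝ (Fin 3)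



/-- the direction weight function -/
def psi (u : E3) (x : E3) : ℝ := Real.sqrt (‖x‖^2 - (inner ℝ u x : ℝ)^2) / ‖x‖

lemma psi_nonneg (u x : E3) : 0 ≤ psi u x :=
  div_nonneg (Real.sqrt_nonneg _) (norm_nonneg _)

lemma inner_sq_le (u x : E3) (hu : ‖u‖ = 1) : (inner ℝ u x : ℝ)^2 ≤ ‖x‖^2 := by
  have h := abs_real_inner_le_norm u x
  rw [hu, one_mul] at h
  nlinarith [abs_nonneg (inner ℝ u x : ℝ), sq_abs (inner ℝ u x : ℝ), norm_nonneg x]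

lemma psi_le_one (u x : E3) (hu : ‖u‖ = 1) : psi u x ≤ 1 := by
  rcases eq_or_ne x 0 with rfl | hx
  · simp [psi]
  · have hxn : (0:ℝ) < ‖x‖ := norm_pos_iff.mpr hx
    rw [psi, div_le_one hxn]
    calc Real.sqrt (‖x‖^2 - (inner ℝ u x : ℝ)^2) ≤ Real.sqrt (‖x‖^2) := by
          apply Real.sqrt_le_sqrt; nlinarith [sq_nonneg (inner ℝ u x : ℝ)]
      _ = ‖x‖ := Real.sqrt_sq hxn.le

lemma psi_measurable (u : E3) : Measurable (psi u) := by
  apply Measurable.div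
  · exact (Real.continuous_sqrt.comp ((continuous_norm.pow 2).sub
      ((continuous_const.inner continuous_id).pow 2))).measurable
  · exact continuous_norm.measurable

lemma psi_eq_sphere (u x : E3) (hu : ‖u‖ = 1) (hx : x ≠ 0) :
    psi u x = Real.sqrt (1 - (inner ℝ u (‖x‖⁻¹ • x) : ℝ)^2) := by
  have hxn : (0:ℝ) < ‖x‖ := norm_pos_iff.mpr hx
  rw [real_inner_smul_right]
  have h1 : 1 - (‖x‖⁻¹ * (inner ℝ u x : ℝ))^2 = (‖x‖^2 - (inner ℝ u x : ℝ)^2) / ‖x‖^2 := by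
    field_simp
  rw [h1, Real.sqrt_div (by nlinarith [inner_sq_le u x hu]), Real.sqrt_sq hxn.le, psi]



lemma int_r_sq : ∫ r in Set.Ioi (0:ℝ), (if r < 1 then r^2 else 0) = 1/3 := by
  have h : (fun r : ℝ => if r < 1 then r^2 else 0)
      = fun r => (Set.Iio (1:ℝ)).indicator (fun s => s^2) r := by
    funext r; simp [Set.indicator_apply, Set.mem_Iio]
  rw [h, setIntegral_indicator measurableSet_Iio]
  have h2 : Set.Ioi (0:ℝ) ∩ Set.Iio 1 = Set.Ioo 0 1 := by
    ext y; simp [Set.mem_Ioo, and_comm]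
  rw [h2, ← integral_Ioc_eq_integral_Ioo, ← intervalIntegral.integral_of_le (by norm_num)]
  rw [integral_pow]
  norm_num

lemma int_sin_sq : ∫ θ in Set.Ioo (-π) π, (if 0 < Real.sin θ then Real.sin θ^2 else 0) = π/2 := by
  have h : (fun θ : ℝ => if 0 < Real.sin θ then Real.sin θ^2 else 0)
      = fun θ => ({s : ℝ | 0 < Real.sin s}).indicator (fun s => Real.sin s^2) θ := by
    funext θ; simp [Set.indicator_apply]
  have hms : MeasurableSet {s : ℝ | 0 < Real.sin s} :=
    measurableSet_lt measurable_const Real.continuous_sin.measurable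
  rw [h, setIntegral_indicator hms]
  have h2 : Set.Ioo (-π) π ∩ {s : ℝ | 0 < Real.sin s} = Set.Ioo 0 π := by
    ext y
    simp only [Set.mem_inter_iff, Set.mem_Ioo, Set.mem_setOf_eq]
    constructor
    · rintro ⟨⟨h1, h2⟩, h3⟩
      refine ⟨?_, h2⟩
      by_contra hy
      push_neg at hy
      have : 0 ≤ Real.sin (-y) := Real.sin_nonneg_of_nonneg_of_le_pi (by linarith) (by linarith)
      rw [Real.sin_neg] at this
      linarith
    · rintro ⟨h1, h2⟩
      exact ⟨⟨by linarith [Real.pi_pos], h2⟩, Real.sin_pos_of_pos_of_lt_pi h1 h2⟩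
  rw [h2, ← integral_Ioc_eq_integral_Ioo, ← intervalIntegral.integral_of_le Real.pi_pos.le]
  rw [integral_sin_sq]
  simp [Real.sin_pi]

/-- generic integrability criterion -/
lemma integrable_of_bdd_supp {X : Type*} [MeasureSpace X] {f : X → ℝ} {s : Set X}
    (hs : MeasurableSet s) (hμ : volume s ≠ ⊤) (hf : Measurable f)
    (hsupp : ∀ x, x ∉ s → f x = 0) {M : ℝ} (hM : ∀ x, |f x| ≤ M) : Integrable f := by
  have h : f = s.indicator f := by
    funext x; by_cases hx : x ∈ s <;> simp [hx, hsupp, Set.indicator_apply]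
  rw [h, integrable_indicator_iff hs]
  exact Measure.integrableOn_of_bounded hμ hf.aestronglyMeasurable
    (ae_of_all _ fun a => by rw [Real.norm_eq_abs]; exact hM a)



/-- integrand on ℝ × (ℝ × ℝ) -/
def G : ℝ × (ℝ × ℝ) → ℝ := fun q =>
  if q.1^2 + q.2.1^2 + q.2.2^2 < 1 then
    Real.sqrt (q.2.1^2 + q.2.2^2) / Real.sqrt (q.1^2 + q.2.1^2 + q.2.2^2) else 0

/-- integrand on ℝ × ℝ (z, r) -/
def H : ℝ × ℝ → ℝ := fun q =>
  if 0 < q.2 ∧ q.1^2 + q.2^2 < 1 then q.2^2 / Real.sqrt (q.1^2 + q.2^2) else 0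

lemma measurable_G : Measurable G := by
  unfold G
  have hs : MeasurableSet {q : ℝ × (ℝ × ℝ) | q.1^2 + q.2.1^2 + q.2.2^2 < 1} := by
    apply measurableSet_lt _ measurable_const
    fun_prop
  refine Measurable.ite hs ?_ measurable_const
  apply Measurable.div <;> fun_prop

lemma measurable_H : Measurable H := by
  unfold H
  have hs : MeasurableSet {q : ℝ × ℝ | 0 < q.2 ∧ q.1^2 + q.2^2 < 1} := by
    apply MeasurableSet.inter
    · exact measurableSet_lt measurable_const measurable_snd
    · show MeasurableSet {q : ℝ × ℝ | q.1^2 + q.2^2 < 1}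
      apply measurableSet_lt _ measurable_const; fun_prop
  refine Measurable.ite hs ?_ measurable_const
  apply Measurable.div <;> fun_prop

lemma integrable_G : Integrable G := by
  apply integrable_of_bdd_supp
    (s := {q : ℝ × (ℝ × ℝ) | q.1^2 + q.2.1^2 + q.2.2^2 < 1}) ?_ ?_ measurable_G ?_ (M := 1)
  · intro q
    unfold G
    split_ifs with h
    · rw [abs_of_nonneg (div_nonneg (Real.sqrt_nonneg _) (Real.sqrt_nonneg _))]
      rcases eq_or_lt_of_le (Real.sqrt_nonneg (q.1^2 + q.2.1^2 + q.2.2^2)) with he | hlt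
      · rw [← he]; simp
      · rw [div_le_one hlt]
        apply Real.sqrt_le_sqrt; nlinarith [sq_nonneg q.1]
    · simp
  · apply measurableSet_lt _ measurable_const; fun_prop
  · have hsub : {q : ℝ × (ℝ × ℝ) | q.1^2 + q.2.1^2 + q.2.2^2 < 1} ⊆ Metric.ball (0 : ℝ × (ℝ × ℝ)) 2 := by
      intro q hq
      simp only [Set.mem_setOf_eq] at hq
      have h1 : |q.1| < 1 := by rw [← sq_lt_one_iff_abs_lt_one]; nlinarith [sq_nonneg q.2.1, sq_nonneg q.2.2]
      have h2 : |q.2.1| < 1 := by rw [← sq_lt_one_iff_abs_lt_one]; nlinarith [sq_nonneg q.1, sq_nonneg q.2.2]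
      have h3 : |q.2.2| < 1 := by rw [← sq_lt_one_iff_abs_lt_one]; nlinarith [sq_nonneg q.1, sq_nonneg q.2.1]
      rw [Metric.mem_ball, dist_zero_right, Prod.norm_def, Prod.norm_def]
      simp only [Real.norm_eq_abs]
      exact max_lt (by linarith) (max_lt (by linarith) (by linarith))
    exact (lt_of_le_of_lt (measure_mono hsub) measure_ball_lt_top).ne
  · intro q hq
    simp only [Set.mem_setOf_eq, not_lt] at hq
    unfold G
    rw [if_neg (not_lt.mpr hq)]

lemma integrable_H : Integrable H := by
  apply integrable_of_bdd_supp
    (s := {q : ℝ × ℝ | 0 < q.2 ∧ q.1^2 + q.2^2 < 1}) ?_ ?_ measurable_H ?_ (M := 1)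
  · intro q
    unfold H
    split_ifs with h
    · obtain ⟨h1, h2⟩ := h
      have hd : (0:ℝ) < Real.sqrt (q.1^2 + q.2^2) := by
        apply Real.sqrt_pos.mpr; nlinarith
      rw [abs_of_nonneg (div_nonneg (sq_nonneg _) hd.le), div_le_one hd]
      calc q.2^2 ≤ Real.sqrt (q.1^2+q.2^2)^2 := by
            rw [Real.sq_sqrt (by nlinarith)]; nlinarith [sq_nonneg q.1]
        _ ≤ Real.sqrt (q.1^2+q.2^2) := by nlinarith [Real.sqrt_le_sqrt (show q.1^2+q.2^2 ≤ 1 by nlinarith), Real.sqrt_one, Real.sqrt_nonneg (q.1^2+q.2^2)]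
    · simp
  · apply MeasurableSet.inter
    · exact measurableSet_lt measurable_const measurable_snd
    · show MeasurableSet {q : ℝ × ℝ | q.1^2 + q.2^2 < 1}
      apply measurableSet_lt _ measurable_const; fun_prop
  · have hsub : {q : ℝ × ℝ | 0 < q.2 ∧ q.1^2 + q.2^2 < 1} ⊆ Metric.ball (0 : ℝ × ℝ) 2 := by
      rintro q ⟨h0, hq⟩
      have h1 : |q.1| < 1 := by rw [← sq_lt_one_iff_abs_lt_one]; nlinarith [sq_nonneg q.2]
      have h2 : |q.2| < 1 := by rw [← sq_lt_one_iff_abs_lt_one]; nlinarith [sq_nonneg q.1]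
      rw [Metric.mem_ball, dist_zero_right, Prod.norm_def]
      simp only [Real.norm_eq_abs]
      exact max_lt (by linarith) (by linarith)
    exact (lt_of_le_of_lt (measure_mono hsub) measure_ball_lt_top).ne
  · intro q hq
    simp only [Set.mem_setOf_eq] at hq
    unfold H
    rw [if_neg hq]

lemma sq_add_sq_polar (r θ : ℝ) : (r * Real.cos θ)^2 + (r * Real.sin θ)^2 = r^2 := by
  nlinarith [Real.sin_sq_add_cos_sq θ]

/-- inner polar step -/
lemma inner_polar (z : ℝ) :
    (∫ p : ℝ × ℝ, G (z, p)) =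
      (2*π) * ∫ r in Set.Ioi (0:ℝ), (if z^2 + r^2 < 1 then r^2 / Real.sqrt (z^2+r^2) else 0) := by
  rw [← integral_comp_polarCoord_symm (fun p => G (z, p))]
  have hcongr : ∀ q ∈ polarCoord.target,
      q.1 • G (z, polarCoord.symm q) =
      (fun r => if z^2 + r^2 < 1 then r^2 / Real.sqrt (z^2+r^2) else 0) q.1 * (fun _ : ℝ => (1:ℝ)) q.2 := by
    rintro ⟨r, θ⟩ hq
    rw [polarCoord_target] at hq
    obtain ⟨hr, hθ⟩ := hq
    simp only [Set.mem_Ioi] at hr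
    rw [polarCoord_symm_apply]
    simp only [G, smul_eq_mul, mul_one]
    have hsq : (r*Real.cos θ)^2 + (r*Real.sin θ)^2 = r^2 := sq_add_sq_polar r θ
    have hsq2 : z^2 + (r*Real.cos θ)^2 + (r*Real.sin θ)^2 = z^2 + r^2 := by
      rw [add_assoc, hsq]
    rw [hsq2, hsq, Real.sqrt_sq hr.le]
    split_ifs with h
    · field_simp
    · ring
  rw [setIntegral_congr_fun polarCoord.open_target.measurableSet hcongr, polarCoord_target,
    Measure.volume_eq_prod, ← Measure.prod_restrict,
    integral_prod_mul (fun r => if z ^ 2 + r ^ 2 < 1 then r ^ 2 / Real.sqrt (z ^ 2 + r ^ 2) else 0)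
      (fun _ : ℝ => (1:ℝ))]
  simp only [integral_const, smul_eq_mul, mul_one, MeasurableSet.univ,
    Measure.restrict_apply, Set.univ_inter, Real.volume_Ioo]
  rw [measureReal_restrict_apply_univ, Real.volume_real_Ioo_of_le (by linarith [Real.pi_pos])]
  ring

lemma outer_polar : ∫ q : ℝ × ℝ, H q = (1/3) * (π/2) := by
  rw [← integral_comp_polarCoord_symm H]
  have hcongr : ∀ q ∈ polarCoord.target,
      q.1 • H (polarCoord.symm q) =
      (fun r => if r < 1 then r^2 else 0) q.1 *
        (fun θ => if 0 < Real.sin θ then Real.sin θ^2 else 0) q.2 := by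
    rintro ⟨r, θ⟩ hq
    rw [polarCoord_target] at hq
    obtain ⟨hr, hθ⟩ := hq
    simp only [Set.mem_Ioi] at hr
    rw [polarCoord_symm_apply]
    simp only [H, smul_eq_mul]
    rw [sq_add_sq_polar, Real.sqrt_sq hr.le]
    have hc1 : (0 < r * Real.sin θ) ↔ 0 < Real.sin θ := by
      constructor
      · intro h; nlinarith
      · intro h; exact mul_pos hr h
    have hc2 : r^2 < 1 ↔ r < 1 := by
      constructor
      · intro h; nlinarith
      · intro h; nlinarith
    simp only [hc1, hc2]
    have hr0 : r ≠ 0 := hr.ne'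
    by_cases h1 : 0 < Real.sin θ <;> by_cases h2 : r < 1 <;>
      simp [h1, h2] <;> field_simp <;> ring
  rw [setIntegral_congr_fun polarCoord.open_target.measurableSet hcongr, polarCoord_target,
    Measure.volume_eq_prod, ← Measure.prod_restrict,
    integral_prod_mul (fun r => if r < 1 then r ^ 2 else 0)
      (fun θ => if 0 < Real.sin θ then Real.sin θ ^ 2 else 0),
    int_r_sq, int_sin_sq]

lemma integral_G_eq : ∫ q : ℝ × (ℝ × ℝ), G q = π^2/3 := by
  have hG' : Integrable G ((volume : Measure ℝ).prod (volume : Measure (ℝ × ℝ))) := by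
    rw [← Measure.volume_eq_prod]; exact integrable_G
  rw [Measure.volume_eq_prod, integral_prod _ hG']
  simp_rw [inner_polar]
  have hk : ∀ z : ℝ, (∫ r in Set.Ioi (0:ℝ), if z^2 + r^2 < 1 then r^2 / Real.sqrt (z^2+r^2) else 0)
      = ∫ r : ℝ, H (z, r) := by
    intro z
    rw [← integral_indicator measurableSet_Ioi]
    congr 1
    funext r
    simp only [Set.indicator_apply, Set.mem_Ioi, H]
    by_cases h1 : 0 < r <;> by_cases h2 : z^2 + r^2 < 1 <;> simp [h1, h2]
  simp_rw [hk]
  rw [integral_const_mul]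
  have hH' : Integrable H ((volume : Measure ℝ).prod (volume : Measure ℝ)) := by
    rw [← Measure.volume_eq_prod]; exact integrable_H
  have hsw : ∫ z : ℝ, ∫ r : ℝ, H (z, r) = ∫ q : ℝ × ℝ, H q := by
    rw [Measure.volume_eq_prod, integral_prod _ hH']
  rw [hsw, outer_polar]
  ring






def e0 : E3 := EuclideanSpace.single 0 1

def PsiEq : E3 ≃ᵐ ℝ × (ℝ × ℝ) :=
  (MeasurableEquiv.toLp 2 (Fin 3 → ℝ)).symm.trans
    ((MeasurableEquiv.piFinSuccAbove (fun _ : Fin 3 => ℝ) 0).trans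
      ((MeasurableEquiv.refl ℝ).prodCongr MeasurableEquiv.finTwoArrow))

lemma PsiEq_apply (x : E3) : PsiEq x = (x 0, (x 1, x 2)) := rfl

lemma PsiEq_mp : MeasurePreserving (⇑PsiEq) volume volume := by
  have h1 := EuclideanSpace.volume_preserving_symm_measurableEquiv_toLp (Fin 3)
  have h2 := measurePreserving_piFinSuccAbove (fun _ : Fin 3 => (volume : Measure ℝ)) 0
  have h3 := (MeasurePreserving.id (volume : Measure ℝ)).prod
    (volume_preserving_finTwoArrow ℝ)
  rw [← volume_pi, ← volume_pi] at h2
  rw [← Measure.volume_eq_prod ℝ (Fin 2 → ℝ)] at h2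
  rw [← Measure.volume_eq_prod ℝ (Fin 2 → ℝ), ← Measure.volume_eq_prod ℝ (ℝ × ℝ)] at h3
  exact (h3.comp h2).comp h1

lemma norm_sq_eq (x : E3) : ‖x‖^2 = (x 0)^2 + (x 1)^2 + (x 2)^2 := by
  rw [EuclideanSpace.norm_eq, Real.sq_sqrt (by positivity), Fin.sum_univ_three]
  simp [Real.norm_eq_abs, sq_abs]

lemma indicator_eq_G (x : E3) :
    (Metric.ball (0:E3) 1).indicator (psi e0) x = G (PsiEq x) := by
  rw [PsiEq_apply]
  have hS : ‖x‖^2 = (x 0)^2 + (x 1)^2 + (x 2)^2 := norm_sq_eq x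
  have hnorm : ‖x‖ = Real.sqrt ((x 0)^2 + (x 1)^2 + (x 2)^2) := by
    rw [← hS, Real.sqrt_sq (norm_nonneg x)]
  have hinner : (inner ℝ e0 x : ℝ) = x 0 := by
    rw [e0, EuclideanSpace.inner_single_left]; simp
  have hlt : ‖x‖ < 1 ↔ (x 0)^2 + (x 1)^2 + (x 2)^2 < 1 := by
    constructor
    · intro h; nlinarith [norm_nonneg x]
    · intro h; nlinarith [norm_nonneg x]
  classical
  rw [Set.indicator_apply]
  simp only [Metric.mem_ball, dist_zero_right, G]
  by_cases h : ‖x‖ < 1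
  · rw [if_pos h, if_pos (hlt.mp h), psi, hinner, hS, hnorm]
    congr 1
    congr 1
    ring
  · rw [if_neg h, if_neg (fun hc => h (hlt.mpr hc))]

lemma integral_ball_e0_eq_integral_G :
    ∫ x in Metric.ball (0:E3) 1, psi e0 x = ∫ q : ℝ × (ℝ × ℝ), G q := by
  rw [← integral_indicator Metric.isOpen_ball.measurableSet]
  rw [show (fun x => (Metric.ball (0:E3) 1).indicator (psi e0) x)
      = fun x => G (PsiEq x) from funext indicator_eq_G]
  exact PsiEq_mp.integral_comp PsiEq.measurableEmbedding G

lemma integral_ball_psi (u : E3) (hu : ‖u‖ = 1) :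
    ∫ x in Metric.ball (0:E3) 1, psi u x = ∫ q : ℝ × (ℝ × ℝ), G q := by
  have he : ‖e0‖ = 1 := by rw [e0, EuclideanSpace.norm_single]; norm_num
  set R := Submodule.reflection (Submodule.span ℝ {u - e0})ᗮ with hRdef
  have hRu : R u = e0 := Submodule.reflection_sub (by rw [hu, he])
  have hpsi : ∀ x : E3, psi u x = psi e0 (R x) := by
    intro x
    simp only [psi]
    rw [← LinearIsometryEquiv.inner_map_map R u x, hRu, LinearIsometryEquiv.norm_map]
  have hpre : ⇑R ⁻¹' (Metric.ball (0:E3) 1) = Metric.ball (0:E3) 1 := by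
    ext x
    simp [Metric.mem_ball, dist_zero_right, R.norm_map]
  have hemb : MeasurableEmbedding (⇑R) := R.toHomeomorph.measurableEmbedding
  calc ∫ x in Metric.ball (0:E3) 1, psi u x
      = ∫ x in ⇑R ⁻¹' (Metric.ball (0:E3) 1), psi e0 (R x) := by
        rw [hpre]; exact setIntegral_congr_fun Metric.isOpen_ball.measurableSet
          (fun x _ => hpsi x)
    _ = ∫ y in Metric.ball (0:E3) 1, psi e0 y :=
        R.measurePreserving.setIntegral_preimage_emb hemb _ _
    _ = ∫ q : ℝ × (ℝ × ℝ), G q := integral_ball_e0_eq_integral_G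





lemma gamma_52 : Real.Gamma ((3:ℝ)/2 + 1) = 3 * Real.sqrt π / 4 := by
  rw [Real.Gamma_add_one (by norm_num)]
  rw [show (3:ℝ)/2 = 1/2 + 1 by norm_num, Real.Gamma_add_one (by norm_num),
    Real.Gamma_one_half_eq]
  ring

lemma vol_ball_toReal : (volume (Metric.ball (0:E3) 1)).toReal = 4 * π / 3 := by
  rw [EuclideanSpace.volume_ball (Fin 3) 0 1]
  have hcard : (Fintype.card (Fin 3) : ℝ) = 3 := by simp
  rw [show (Fintype.card (Fin 3)) = 3 from by simp]
  push_cast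
  rw [show ((3:ℝ)/2 + 1) = (3:ℝ)/2 + 1 from rfl, gamma_52]
  have hsp : Real.sqrt π > 0 := Real.sqrt_pos.mpr Real.pi_pos
  have hval : Real.sqrt π ^ 3 / (3 * Real.sqrt π / 4) = 4 * π / 3 := by
    rw [pow_succ, Real.sq_sqrt Real.pi_pos.le]
    field_simp
  rw [hval]
  simp [ENNReal.toReal_ofReal (by positivity : (0:ℝ) ≤ 4 * π / 3)]



lemma max_ge (m : ℕ) (t : Fin m → ℝ) (u : Fin m → E3) (hu : ∀ i, ‖u i‖ = 1)
    (v₀ : E3) (hv₀s : v₀ ∈ Metric.sphere (0:E3) 1)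
    (hv₀max : IsMaxOn (fun v : E3 => ∑ i, t i ^ 2 * Real.sqrt (1 - (inner ℝ (u i) v : ℝ) ^ 2))
      (Metric.sphere (0:E3) 1) v₀) :
    π / 4 * (∑ i, t i ^ 2) ≤ ∑ i, t i ^ 2 * Real.sqrt (1 - (inner ℝ (u i) v₀ : ℝ) ^ 2) := by
  classical
  set S := Metric.ball (0:E3) 1 with hSdef
  set Fv₀ := ∑ i, t i ^ 2 * Real.sqrt (1 - (inner ℝ (u i) v₀ : ℝ) ^ 2) with hFv₀
  have hFv₀nonneg : 0 ≤ Fv₀ := by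
    apply Finset.sum_nonneg
    intro i _
    positivity
  have hIntOn : ∀ i : Fin m, IntegrableOn (fun x => t i ^ 2 * psi (u i) x) S volume := by
    intro i
    apply Integrable.const_mul
    apply Measure.integrableOn_of_bounded measure_ball_lt_top.ne
      (psi_measurable (u i)).aestronglyMeasurable (M := 1)
    apply ae_of_all
    intro a
    rw [Real.norm_eq_abs, abs_of_nonneg (psi_nonneg _ _)]
    exact psi_le_one _ a (hu i)
  have hsum : ∫ x in S, (∑ i, t i ^ 2 * psi (u i) x) = (π^2/3) * ∑ i, t i ^ 2 := by
    rw [integral_finset_sum _ (fun i _ => hIntOn i)]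
    rw [Finset.sum_congr rfl (fun i _ => by
      rw [integral_const_mul, (integral_ball_psi (u i) (hu i)).trans integral_G_eq])]
    rw [← Finset.sum_mul]
    ring
  have hpt : ∀ x ∈ S, (∑ i, t i ^ 2 * psi (u i) x) ≤ Fv₀ := by
    intro x _
    by_cases hx0 : x = 0
    · subst hx0
      have : ∀ i : Fin m, psi (u i) (0:E3) = 0 := by
        intro i
        simp [psi]
      simp only [this, mul_zero, Finset.sum_const_zero]
      exact hFv₀nonneg
    · have hxn : (0:ℝ) < ‖x‖ := norm_pos_iff.mpr hx0
      have hvmem : (‖x‖⁻¹ • x) ∈ Metric.sphere (0:E3) 1 := by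
        rw [mem_sphere_zero_iff_norm, norm_smul, norm_inv, norm_norm,
          inv_mul_cancel₀ hxn.ne']
      have heq : ∀ i : Fin m, psi (u i) x
          = Real.sqrt (1 - (inner ℝ (u i) (‖x‖⁻¹ • x) : ℝ) ^ 2) :=
        fun i => psi_eq_sphere (u i) x (hu i) hx0
      calc (∑ i, t i ^ 2 * psi (u i) x)
          = ∑ i, t i ^ 2 * Real.sqrt (1 - (inner ℝ (u i) (‖x‖⁻¹ • x) : ℝ) ^ 2) := by
            exact Finset.sum_congr rfl (fun i _ => by rw [heq i])
        _ ≤ Fv₀ := hv₀max hvmem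
  have hle : ∫ x in S, (∑ i, t i ^ 2 * psi (u i) x) ≤ (volume S).toReal * Fv₀ := by
    calc ∫ x in S, (∑ i, t i ^ 2 * psi (u i) x) ≤ ∫ _x in S, Fv₀ :=
          setIntegral_mono_on (integrable_finset_sum _ (fun i _ => hIntOn i))
            (integrableOn_const measure_ball_lt_top.ne)
            Metric.isOpen_ball.measurableSet hpt
      _ = (volume S).toReal * Fv₀ := by rw [setIntegral_const, smul_eq_mul, measureReal_def]
  rw [hsum, hSdef, vol_ball_toReal] at hle
  nlinarith [Real.pi_pos]

end

end Stmt11Aux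

open Real

theorem stmt11 (m : ℕ) (hm : 1 ≤ m) (t : Fin m → ℝ)
    (u : Fin m → EuclideanSpace ℝ (Fin 3)) (hu : ∀ i, ‖u i‖ = 1) :
    ∃ v : EuclideanSpace ℝ (Fin 3), ‖v‖ = 1 ∧
      (π / 8) * ∑ i, t i ^ 2 ≤
        (1 / 2) * ∑ i, t i ^ 2 * Real.sqrt (1 - (inner ℝ (u i) v : ℝ) ^ 2) := by
  classical
  have hFcont : Continuous (fun v : EuclideanSpace ℝ (Fin 3) =>
      ∑ i, t i ^ 2 * Real.sqrt (1 - (inner ℝ (u i) v : ℝ) ^ 2)) := by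
    apply continuous_finset_sum
    intro i _
    exact continuous_const.mul (Real.continuous_sqrt.comp
      (continuous_const.sub ((continuous_const.inner continuous_id).pow 2)))
  obtain ⟨v₀, hv₀s, hv₀max⟩ := (isCompact_sphere (0 : EuclideanSpace ℝ (Fin 3)) 1).exists_isMaxOn
    (NormedSpace.sphere_nonempty.mpr zero_le_one) hFcont.continuousOn
  refine ⟨v₀, mem_sphere_zero_iff_norm.mp hv₀s, ?_⟩
  have h := Stmt11Aux.max_ge m t u hu v₀ hv₀s hv₀max
  linarith
end

section
/- Let a and b be independent N(0,1) real random variables and let θ ∈ [0, π/2]. Then E[ |a·(a·cos(θ) + b·sin(θ))| ] = (2/π)·( sin(θ) + (π/2 − θ)·cos(θ) ). -/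
open Real MeasureTheory ProbabilityTheory
open Set Filter intervalIntegral
open scoped ENNReal NNReal Topology

lemma prodDensity :
    ((gaussianReal 0 1).prod (gaussianReal 0 1)) =
      (volume : Measure (ℝ × ℝ)).withDensity
        (fun p => ((gaussianPDFReal 0 1 p.1 * gaussianPDFReal 0 1 p.2).toNNReal : ℝ≥0∞)) := by
  rw [Measure.volume_eq_prod]
  refine Measure.prod_eq fun s t hs ht => ?_
  rw [withDensity_apply _ (hs.prod ht), ← Measure.prod_restrict]
  have : ∀ p : ℝ × ℝ, ((gaussianPDFReal 0 1 p.1 * gaussianPDFReal 0 1 p.2).toNNReal : ℝ≥0∞)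
      = gaussianPDF 0 1 p.1 * gaussianPDF 0 1 p.2 := by
    intro p
    rw [gaussianPDF, gaussianPDF, ← ENNReal.ofReal_mul (gaussianPDFReal_nonneg _ _ _)]
    rfl
  simp_rw [this]
  rw [lintegral_prod_mul (measurable_gaussianPDF _ _).aemeasurable
    (measurable_gaussianPDF _ _).aemeasurable,
    gaussianReal_apply _ one_ne_zero s,
    gaussianReal_apply _ one_ne_zero t]

lemma radial : ∫ r in Ioi (0:ℝ), r ^ 3 * rexp (-(r ^ 2) / 2) = 2 := by
  have hderiv : ∀ x ∈ Ici (0:ℝ),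
      HasDerivAt (fun r : ℝ => -(r ^ 2 + 2) * rexp (-(r ^ 2) / 2))
        (x ^ 3 * rexp (-(x ^ 2) / 2)) x := by
    intro x _
    have h1 : HasDerivAt (fun r : ℝ => -(r ^ 2 + 2)) (-(2 * x)) x := by
      exact (((hasDerivAt_pow 2 x).add_const 2).neg).congr_deriv (by norm_num)
    have h2 : HasDerivAt (fun r : ℝ => rexp (-(r ^ 2) / 2)) (-x * rexp (-(x ^ 2) / 2)) x := by
      have h3 : HasDerivAt (fun r : ℝ => -(r ^ 2) / 2) (-x) x := by
        have := ((hasDerivAt_pow 2 x).neg).div_const 2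
        simpa using this.congr_deriv (by ring)
      exact ((Real.hasDerivAt_exp _).comp x h3).congr_deriv (by ring)
    have := h1.mul h2
    exact this.congr_deriv (by ring)
  have hint : IntegrableOn (fun x : ℝ => x ^ 3 * rexp (-(x ^ 2) / 2)) (Ioi 0) := by
    have := integrableOn_rpow_mul_exp_neg_mul_sq (b := 1/2) (by norm_num) (s := 3) (by norm_num)
    apply this.congr_fun ?_ measurableSet_Ioi
    intro x hx
    simp only []
    have hx3 : x ^ (3:ℝ) = x ^ (3:ℕ) := by
      rw [← rpow_natCast]; norm_num
    rw [hx3]; ring_nf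
  have htend : Tendsto (fun r : ℝ => -(r ^ 2 + 2) * rexp (-(r ^ 2) / 2)) atTop (𝓝 0) := by
    have h0 : Tendsto (fun t : ℝ => -(t + 2) * rexp (-t / 2)) atTop (𝓝 0) := by
      have h1 : Tendsto (fun t : ℝ => (t + 2) * rexp (-t / 2)) atTop (𝓝 0) := by
        have ha : Tendsto (fun s : ℝ => 2 * (s ^ 1 * rexp (-s)) + 2 * rexp (-s)) atTop (𝓝 0) := by
          have := ((tendsto_pow_mul_exp_neg_atTop_nhds_zero 1).const_mul 2).add
            (tendsto_exp_neg_atTop_nhds_zero.const_mul 2)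
          simpa using this
        have hb : Tendsto (fun t : ℝ => t / 2) atTop atTop :=
          tendsto_id.atTop_div_const two_pos
        have := ha.comp hb
        apply this.congr
        intro t
        simp only [Function.comp_apply, pow_one]
        ring
      have h2 := h1.neg
      rw [neg_zero] at h2
      exact h2.congr fun t => by ring
    have h2 : Tendsto (fun r : ℝ => r ^ 2) atTop atTop := tendsto_pow_atTop (by norm_num)
    exact h0.comp h2
  have := integral_Ioi_of_hasDerivAt_of_tendsto' hderiv hint htend
  rw [this]; norm_num

lemma hG (θ x : ℝ) : HasDerivAt (fun φ => sin (2*φ - θ)/4 + φ * cos θ / 2)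
    (cos x * cos (x - θ)) x := by
  have h1 : HasDerivAt (fun φ : ℝ => 2*φ - θ) 2 x := by
    simpa using ((hasDerivAt_id x).const_mul 2).sub_const θ
  have h2 := ((Real.hasDerivAt_sin (2*x-θ)).comp x h1).div_const 4
  have h3 := h2.add (((hasDerivAt_id x).mul_const (cos θ)).div_const 2)
  refine h3.congr_deriv ?_
  have e1 : cos (2*x - θ) = cos x * cos (x-θ) - sin x * sin (x-θ) := by
    rw [show 2*x - θ = x + (x-θ) by ring]; exact cos_add x (x-θ)
  have e2 := Real.cos_sub x (x-θ)
  ring_nf at e2 ⊢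
  ring_nf at e1
  linarith [e1, e2]

lemma ftc (θ a b : ℝ) : ∫ x in a..b, cos x * cos (x - θ) =
    (sin (2*b - θ)/4 + b * cos θ / 2) - (sin (2*a - θ)/4 + a * cos θ / 2) :=
  intervalIntegral.integral_eq_sub_of_hasDerivAt (fun x _ => hG θ x)
    ((continuous_cos.mul (continuous_cos.comp (continuous_id.sub continuous_const))).intervalIntegrable a b)

lemma angular (θ : ℝ) (h0 : 0 ≤ θ) (h1 : θ ≤ π/2) :
    ∫ φ in (-π)..π, |cos φ * cos (φ - θ)| = 2 * (sin θ + (π/2 - θ) * cos θ) := by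
  have pp := pi_pos
  set f : ℝ → ℝ := fun φ => |cos φ * cos (φ - θ)| with hf_def
  have hf : ∀ a b : ℝ, IntervalIntegrable f volume a b :=
    fun a b => ((continuous_cos.mul (continuous_cos.comp
      (continuous_id.sub continuous_const))).abs.intervalIntegrable a b)
  have split : (∫ x in (-π)..π, f x) =
      ((((∫ x in (-π)..(-π/2), f x) + ∫ x in (-π/2)..(θ-π/2), f x)
        + ∫ x in (θ-π/2)..(π/2), f x) + ∫ x in (π/2)..(θ+π/2), f x)
        + ∫ x in (θ+π/2)..π, f x := by
    rw [integral_add_adjacent_intervals (hf _ _) (hf _ _),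
        integral_add_adjacent_intervals (hf _ _) (hf _ _),
        integral_add_adjacent_intervals (hf _ _) (hf _ _),
        integral_add_adjacent_intervals (hf _ _) (hf _ _)]
  have p1 : (∫ x in (-π)..(-π/2), f x) = ∫ x in (-π)..(-π/2), cos x * cos (x - θ) := by
    refine integral_congr ?_
    rw [uIcc_of_le (by linarith)]
    intro x hx
    have hx1 := hx.1; have hx2 := hx.2
    have c1 : cos x ≤ 0 := by
      rw [← cos_neg]
      exact cos_nonpos_of_pi_div_two_le_of_le (by linarith) (by linarith)
    have c2 : cos (x - θ) ≤ 0 := by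
      rw [← cos_neg]
      exact cos_nonpos_of_pi_div_two_le_of_le (by linarith) (by linarith)
    exact abs_of_nonneg (by nlinarith)
  have p2 : (∫ x in (-π/2)..(θ-π/2), f x) = ∫ x in (-π/2)..(θ-π/2), -(cos x * cos (x - θ)) := by
    refine integral_congr ?_
    rw [uIcc_of_le (by linarith)]
    intro x hx
    have hx1 := hx.1; have hx2 := hx.2
    have c1 : 0 ≤ cos x := cos_nonneg_of_mem_Icc ⟨by linarith, by linarith⟩
    have c2 : cos (x - θ) ≤ 0 := by
      rw [← cos_neg]
      exact cos_nonpos_of_pi_div_two_le_of_le (by linarith) (by linarith)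
    exact abs_of_nonpos (mul_nonpos_iff.2 (Or.inl ⟨c1, c2⟩))
  have p3 : (∫ x in (θ-π/2)..(π/2), f x) = ∫ x in (θ-π/2)..(π/2), cos x * cos (x - θ) := by
    refine integral_congr ?_
    rw [uIcc_of_le (by linarith)]
    intro x hx
    have hx1 := hx.1; have hx2 := hx.2
    have c1 : 0 ≤ cos x := cos_nonneg_of_mem_Icc ⟨by linarith, by linarith⟩
    have c2 : 0 ≤ cos (x - θ) := cos_nonneg_of_mem_Icc ⟨by linarith, by linarith⟩
    exact abs_of_nonneg (mul_nonneg c1 c2)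
  have p4 : (∫ x in (π/2)..(θ+π/2), f x) = ∫ x in (π/2)..(θ+π/2), -(cos x * cos (x - θ)) := by
    refine integral_congr ?_
    rw [uIcc_of_le (by linarith)]
    intro x hx
    have hx1 := hx.1; have hx2 := hx.2
    have c1 : cos x ≤ 0 := cos_nonpos_of_pi_div_two_le_of_le (by linarith) (by linarith)
    have c2 : 0 ≤ cos (x - θ) := cos_nonneg_of_mem_Icc ⟨by linarith, by linarith⟩
    exact abs_of_nonpos (mul_nonpos_iff.2 (Or.inr ⟨c1, c2⟩))
  have p5 : (∫ x in (θ+π/2)..π, f x) = ∫ x in (θ+π/2)..π, cos x * cos (x - θ) := by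
    refine integral_congr ?_
    rw [uIcc_of_le (by linarith)]
    intro x hx
    have hx1 := hx.1; have hx2 := hx.2
    have c1 : cos x ≤ 0 := cos_nonpos_of_pi_div_two_le_of_le (by linarith) (by linarith)
    have c2 : cos (x - θ) ≤ 0 := cos_nonpos_of_pi_div_two_le_of_le (by linarith) (by linarith)
    exact abs_of_nonneg (by nlinarith)
  rw [split, p1, p2, p3, p4, p5, intervalIntegral.integral_neg, intervalIntegral.integral_neg, ftc, ftc, ftc, ftc, ftc]
  have v1 : sin (2*(-π) - θ) = -sin θ := by
    rw [show 2*(-π) - θ = -(2*π + θ) by ring, sin_neg, sin_add]; simp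
  have v2 : sin (2*(-π/2) - θ) = sin θ := by
    rw [show 2*(-π/2) - θ = -(π + θ) by ring, sin_neg, sin_add]; simp
  have v3 : sin (2*(θ-π/2) - θ) = -sin θ := by
    rw [show 2*(θ-π/2) - θ = θ - π by ring, sin_sub]; simp
  have v4 : sin (2*(π/2) - θ) = sin θ := by
    rw [show 2*(π/2) - θ = π - θ by ring, sin_sub]; simp
  have v5 : sin (2*(θ+π/2) - θ) = -sin θ := by
    rw [show 2*(θ+π/2) - θ = θ + π by ring, sin_add]; simp
  have v6 : sin (2*π - θ) = -sin θ := by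
    rw [sin_sub]; simp
  rw [v1, v2, v3, v4, v5, v6]
  ring


theorem stmt19 (θ : ℝ) (hθ : θ ∈ Set.Icc (0 : ℝ) (π / 2)) :
    ∫ p : ℝ × ℝ, |p.1 * (p.1 * Real.cos θ + p.2 * Real.sin θ)|
        ∂((gaussianReal 0 1).prod (gaussianReal 0 1)) =
      (2 / π) * (Real.sin θ + (π / 2 - θ) * Real.cos θ) := by
  obtain ⟨h0, h1⟩ := hθ
  have pp := pi_pos
  rw [prodDensity]
  rw [integral_withDensity_eq_integral_smul
    (by
      exact (((measurable_gaussianPDFReal 0 1).comp measurable_fst).mul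
        ((measurable_gaussianPDFReal 0 1).comp measurable_snd)).real_toNNReal)
    (fun p : ℝ × ℝ => |p.1 * (p.1 * Real.cos θ + p.2 * Real.sin θ)|)]
  have step1 : ∀ p : ℝ × ℝ,
      (gaussianPDFReal 0 1 p.1 * gaussianPDFReal 0 1 p.2).toNNReal
          • |p.1 * (p.1 * Real.cos θ + p.2 * Real.sin θ)| =
        (gaussianPDFReal 0 1 p.1 * gaussianPDFReal 0 1 p.2)
          * |p.1 * (p.1 * Real.cos θ + p.2 * Real.sin θ)| := by
    intro p
    rw [NNReal.smul_def, Real.coe_toNNReal _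
      (mul_nonneg (gaussianPDFReal_nonneg _ _ _) (gaussianPDFReal_nonneg _ _ _)), smul_eq_mul]
  simp_rw [step1]
  rw [← integral_comp_polarCoord_symm
    (fun p : ℝ × ℝ => (gaussianPDFReal 0 1 p.1 * gaussianPDFReal 0 1 p.2)
      * |p.1 * (p.1 * Real.cos θ + p.2 * Real.sin θ)|)]
  have step2 : ∫ p in polarCoord.target,
      p.1 • ((gaussianPDFReal 0 1 (polarCoord.symm p).1 * gaussianPDFReal 0 1 (polarCoord.symm p).2)
        * |(polarCoord.symm p).1 * ((polarCoord.symm p).1 * Real.cos θ + (polarCoord.symm p).2 * Real.sin θ)|) =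
      ∫ p in Ioi (0:ℝ) ×ˢ Ioo (-π) π,
        (2*π)⁻¹ * ((p.1 ^ 3 * rexp (-(p.1 ^ 2) / 2)) * |Real.cos p.2 * Real.cos (p.2 - θ)|) := by
    rw [polarCoord_target]
    refine setIntegral_congr_fun (measurableSet_Ioi.prod measurableSet_Ioo) ?_
    rintro ⟨r, φ⟩ ⟨hr, -⟩
    simp only [polarCoord_symm_apply]
    have hr0 : (0:ℝ) < r := hr
    have hsq : (r * Real.cos φ)^2 + (r * Real.sin φ)^2 = r^2 := by
      have := sin_sq_add_cos_sq φ; nlinarith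
    have hpdf : gaussianPDFReal 0 1 (r * Real.cos φ) * gaussianPDFReal 0 1 (r * Real.sin φ)
        = (2*π)⁻¹ * rexp (-(r^2)/2) := by
      rw [gaussianPDFReal_def]
      simp only [NNReal.coe_one, mul_one, sub_zero]
      rw [show (√(2*π))⁻¹ * rexp (-(r * Real.cos φ)^2/2) * ((√(2*π))⁻¹ * rexp (-(r * Real.sin φ)^2/2))
        = ((√(2*π))⁻¹ * (√(2*π))⁻¹) * rexp (-(r * Real.cos φ)^2/2 + -(r * Real.sin φ)^2/2) from by
          rw [Real.exp_add]; ring]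
      rw [← mul_inv, mul_self_sqrt (by positivity)]
      congr 2
      linarith [hsq]
    rw [hpdf]
    have habs : |r * Real.cos φ * (r * Real.cos φ * Real.cos θ + r * Real.sin φ * Real.sin θ)|
        = r^2 * |Real.cos φ * (Real.cos φ * Real.cos θ + Real.sin φ * Real.sin θ)| := by
      rw [show r * Real.cos φ * (r * Real.cos φ * Real.cos θ + r * Real.sin φ * Real.sin θ)
        = r^2 * (Real.cos φ * (Real.cos φ * Real.cos θ + Real.sin φ * Real.sin θ)) by ring,
        abs_mul, abs_of_nonneg (by positivity : (0:ℝ) ≤ r^2)]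
    rw [Real.cos_sub, habs, smul_eq_mul]
    ring
  rw [step2, Measure.volume_eq_prod, ← Measure.prod_restrict,
    MeasureTheory.integral_const_mul,
    integral_prod_mul (fun r : ℝ => r ^ 3 * rexp (-(r ^ 2) / 2))
      (fun φ : ℝ => |Real.cos φ * Real.cos (φ - θ)|),
    radial, ← integral_Ioc_eq_integral_Ioo,
    ← intervalIntegral.integral_of_le (by linarith : -π ≤ π), angular θ h0 h1]
  field_simp
end
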